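/- arXiv:1711.07931 — 11 statements merged into one kernel-verified Lean document; each statement's English description precedes it below -/
import Mathlib

section
/- Let H be a complex Hilbert space, T : H →L[ℂ] H a bounded operator, n a natural number, and suppose (i) the origin (0,...,0) in ℂⁿ does not lie in the interior of the convex hull of the joint numerical range W(T, T², ..., Tⁿ), and (ii) there exists a unit vector x ∈ H with ⟨Tᵏx, x⟩ = 0 for all k = 1, ..., 2n. Then T has an eigenvalue, i.e., the point spectrum of T is nonempty. -/
lemma quad_aux {c d : ℝ} (hd : 0 ≤ d) (h : ∀ t : ℝ, 0 ≤ c * t + d * t ^ 2) : c = 0 := by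
  have key := h (-c / (d + 1))
  have hd1 : (0:ℝ) < d + 1 := by linarith
  have hexp : c * (-c / (d + 1)) + d * (-c / (d + 1)) ^ 2 = -(c ^ 2 * (1 / (d + 1) ^ 2)) := by
    field_simp
    ring
  rw [hexp] at key
  have h1 : c ^ 2 * (1 / (d + 1) ^ 2) ≤ 0 := by linarith
  have h2 : (0:ℝ) < 1 / (d + 1) ^ 2 := by positivity
  have hc2 : c ^ 2 ≤ 0 := by nlinarith
  have : c ^ 2 = 0 := le_antisymm hc2 (sq_nonneg c)
  exact pow_eq_zero_iff two_ne_zero |>.1 this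

lemma sep_lemma {E : Type*} [NormedAddCommGroup E] [NormedSpace ℝ E] [FiniteDimensional ℝ E]
    {S : Set E} (hS : S.Nonempty) (h0 : (0 : E) ∉ interior (convexHull ℝ S)) :
    ∃ f : E →ₗ[ℝ] ℝ, f ≠ 0 ∧ ∀ w ∈ S, 0 ≤ f w := by
  by_cases hint : (interior (convexHull ℝ S)).Nonempty
  · obtain ⟨f, hf⟩ := geometric_hahn_banach_open_point
      ((convex_convexHull ℝ S).interior) isOpen_interior h0
    obtain ⟨z, hz⟩ := hint
    have hfz : f z < 0 := by simpa using hf z hz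
    refine ⟨-(f.toLinearMap), ?_, ?_⟩
    · intro h
      have : f z = 0 := by
        have := LinearMap.congr_fun h z
        simpa [neg_eq_zero] using this
      linarith
    · intro w hw
      have hwC : w ∈ convexHull ℝ S := subset_convexHull ℝ S hw
      simp only [LinearMap.neg_apply, ContinuousLinearMap.coe_coe, Left.nonneg_neg_iff]
      by_contra hfw
      push_neg at hfw
      set L : ℝ := -f z with hL
      have hLpos : 0 < L := by simp only [hL]; linarith
      set t : ℝ := L / (f w + L) with ht
      have hden : 0 < f w + L := by linarith
      have ht0 : 0 < t := div_pos hLpos hden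
      have ht1 : 0 < 1 - t := by
        have : t < 1 := (div_lt_one hden).2 (by linarith)
        linarith
      have hmem : (1 - t) • z + t • w ∈ interior (convexHull ℝ S) := by
        apply (convex_convexHull ℝ S).openSegment_interior_self_subset_interior hz hwC
        exact ⟨1 - t, t, ht1, ht0, by ring, rfl⟩
      have hlt := hf _ hmem
      simp only [map_add, map_smul, smul_eq_mul, map_zero] at hlt
      have hexp : (1 - t) * f z + t * f w = 0 := by
        rw [ht]
        field_simp [hL]
        ring
      linarith
  · rw [Set.not_nonempty_iff_eq_empty] at hint
    have hspan : affineSpan ℝ S ≠ ⊤ := by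
      intro h
      rw [← interior_convexHull_nonempty_iff_affineSpan_eq_top] at h
      rw [hint] at h
      exact Set.not_nonempty_empty h
    obtain ⟨w₀, hw₀⟩ := hS
    have hV : (affineSpan ℝ S).direction ≠ ⊤ := by
      intro h
      exact hspan ((AffineSubspace.direction_eq_top_iff_of_nonempty
        ((affineSpan_nonempty (k := ℝ) (s := S)).2 ⟨w₀, hw₀⟩)).1 h)
    obtain ⟨f, hf0, hfV⟩ := Submodule.exists_dual_map_eq_bot_of_lt_top
      (lt_top_iff_ne_top.2 hV) inferInstance
    have key : ∀ w ∈ S, f w = f w₀ := by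
      intro w hw
      have hmem : w - w₀ ∈ (affineSpan ℝ S).direction := by
        simpa using AffineSubspace.vsub_mem_direction
          (subset_affineSpan ℝ S hw) (subset_affineSpan ℝ S hw₀)
      have hz : f (w - w₀) = 0 := by
        have : f (w - w₀) ∈ Submodule.map f (affineSpan ℝ S).direction :=
          Submodule.mem_map_of_mem hmem
        rw [hfV] at this
        simpa using this
      rw [map_sub, sub_eq_zero] at hz
      exact hz
    rcases le_or_gt 0 (f w₀) with h | h
    · exact ⟨f, hf0, fun w hw => (key w hw) ▸ h⟩
    · exact ⟨-f, neg_ne_zero.2 hf0, fun w hw => by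
        simp only [LinearMap.neg_apply, key w hw]; linarith⟩

open Polynomial in
lemma poly_eigen {H : Type*} [NormedAddCommGroup H] [InnerProductSpace ℂ H]
    (T : H →L[ℂ] H) : ∀ (N : ℕ) (p : ℂ[X]), p.natDegree ≤ N → p ≠ 0 →
    ∀ v : H, v ≠ 0 → (aeval T p) v = 0 → ∃ (μ : ℂ) (w : H), w ≠ 0 ∧ T w = μ • w := by
  intro N
  induction N with
  | zero =>
    intro p hd hp v hv hav
    have hpC := Polynomial.eq_C_of_natDegree_le_zero hd
    rw [hpC] at hav
    have hc : p.coeff 0 ≠ 0 := fun h => hp (by rw [hpC, h, map_zero])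
    have hz : p.coeff 0 • v = 0 := by simpa using hav
    rcases smul_eq_zero.1 hz with h | h
    · exact absurd h hc
    · exact absurd h hv
  | succ N ih =>
    intro p hd hp v hv hav
    rcases Nat.eq_zero_or_pos p.natDegree with h0 | h0
    · exact ih p (by omega) hp v hv hav
    · have hdeg : 0 < p.degree := natDegree_pos_iff_degree_pos.1 h0
      obtain ⟨r, hr⟩ := Complex.exists_root hdeg
      obtain ⟨q, hq⟩ := (dvd_iff_isRoot.2 hr)
      have hXr : (X - C r) ≠ 0 := X_sub_C_ne_zero r
      have hqne : q ≠ 0 := fun h => hp (by rw [hq, h, mul_zero])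
      have hdq : q.natDegree ≤ N := by
        have := natDegree_mul hXr hqne
        rw [← hq, natDegree_X_sub_C] at this
        omega
      have hfac : (aeval T (X - C r)) ((aeval T q) v) = 0 := by
        rw [← ContinuousLinearMap.mul_apply, ← map_mul, ← hq, hav]
      by_cases hw : (aeval T q) v = 0
      · exact ih q hdq hqne v hv hw
      · refine ⟨r, (aeval T q) v, hw, ?_⟩
        have : T ((aeval T q) v) - r • ((aeval T q) v) = 0 := by
          simpa [Algebra.algebraMap_eq_smul_one, sub_eq_zero] using hfac
        rw [sub_eq_zero] at this
        exact this


/-- If `(0,...,0)` is not in the interior of the convex hull of the joint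
numerical range `W(T, T², ..., Tⁿ)` and there is a unit vector `x` with `⟨Tᵏx, x⟩ = 0`
for `k = 1, ..., 2n`, then `T` has an eigenvalue. -/
theorem stmt0 {H : Type*} [NormedAddCommGroup H] [InnerProductSpace ℂ H]
    (T : H →L[ℂ] H) (n : ℕ)
    (h1 : (0 : Fin n → ℂ) ∉ interior (convexHull ℝ
      {w : Fin n → ℂ | ∃ x : H, ‖x‖ = 1 ∧
        ∀ k : Fin n, w k = (inner ℂ ((T ^ ((k : ℕ) + 1)) x) x : ℂ)}))
    (h2 : ∃ x : H, ‖x‖ = 1 ∧ ∀ k : ℕ, 1 ≤ k → k ≤ 2 * n →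
      (inner ℂ ((T ^ k) x) x : ℂ) = 0) :
    ∃ (μ : ℂ) (v : H), v ≠ 0 ∧ T v = μ • v := by
  classical
  obtain ⟨x, hx1, hx2⟩ := h2
  set S : Set (Fin n → ℂ) := {w : Fin n → ℂ | ∃ y : H, ‖y‖ = 1 ∧
      ∀ k : Fin n, w k = (inner ℂ ((T ^ ((k : ℕ) + 1)) y) y : ℂ)} with hSdef
  have hSne : S.Nonempty := ⟨_, x, hx1, fun k => rfl⟩
  obtain ⟨f, hf0, hfpos⟩ := sep_lemma hSne h1
  set e : Fin n → (Fin n → ℂ) := fun k => Pi.single k 1 with he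
  set β : Fin n → ℂ := fun k => (f (e k) : ℂ) + (f (Complex.I • e k) : ℂ) * Complex.I with hβ
  have hβre : ∀ k, (β k).re = f (e k) := by intro k; simp [hβ]
  have hβim : ∀ k, (β k).im = f (Complex.I • e k) := by intro k; simp [hβ]
  have hfw : ∀ w : Fin n → ℂ,
      f w = ∑ k, ((w k).re * f (e k) + (w k).im * f (Complex.I • e k)) := by
    intro w
    have h1k : ∀ k, (w k).re • e k + (w k).im • (Complex.I • e k) = Pi.single k (w k) := by
      intro k
      funext j'
      by_cases hjk : j' = k
      · subst hjk
        simp only [he, Pi.add_apply, Pi.smul_apply, Pi.single_eq_same, smul_eq_mul, mul_one,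
          Complex.real_smul, Complex.ofReal_mul]
        conv_rhs => rw [← Complex.re_add_im (w j')]
      · simp [he, Pi.single_apply, hjk]
    have hw : w = ∑ k, ((w k).re • e k + (w k).im • (Complex.I • e k)) := by
      funext j
      rw [Finset.sum_apply]
      simp_rw [h1k]
      exact (Fintype.sum_pi_single j w).symm
    conv_lhs => rw [hw]
    rw [map_sum]
    refine Finset.sum_congr rfl fun k _ => ?_
    rw [map_add, map_smul, map_smul, smul_eq_mul, smul_eq_mul]
  set A : H →L[ℂ] H := ∑ k : Fin n, β k • T ^ ((k : ℕ) + 1) with hA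
  have hAapp : ∀ y : H, A y = ∑ k : Fin n, β k • ((T ^ ((k : ℕ) + 1)) y) := by
    intro y
    rw [hA, ContinuousLinearMap.sum_apply]
    exact Finset.sum_congr rfl fun k _ => rfl
  have hAy : ∀ y : H, (inner ℂ (A y) y : ℂ)
      = ∑ k, (starRingEnd ℂ) (β k) * (inner ℂ ((T ^ ((k : ℕ) + 1)) y) y : ℂ) := by
    intro y
    rw [hAapp, sum_inner]
    exact Finset.sum_congr rfl fun k _ => inner_smul_left _ _ _
  have hrey : ∀ y : H,
      ((inner ℂ (A y) y : ℂ)).re = f (fun k => (inner ℂ ((T ^ ((k : ℕ) + 1)) y) y : ℂ)) := by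
    intro y
    rw [hAy, hfw, Complex.re_sum]
    refine Finset.sum_congr rfl fun k _ => ?_
    rw [Complex.mul_re]
    simp only [Complex.conj_re, Complex.conj_im, hβre, hβim]
    ring
  have hpos : ∀ y : H, 0 ≤ ((inner ℂ (A y) y : ℂ)).re := by
    intro y
    by_cases hy : y = 0
    · simp [hy]
    · set u : H := ((‖y‖ : ℂ))⁻¹ • y with hu
      have hny : (‖y‖ : ℂ) ≠ 0 := by
        simp [Complex.ofReal_ne_zero, norm_ne_zero_iff, hy]
      have hnu : ‖u‖ = 1 := by
        rw [hu, norm_smul, norm_inv]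
        simp [norm_ne_zero_iff.2 hy]
      have hmem : (fun k : Fin n => (inner ℂ ((T ^ ((k : ℕ) + 1)) u) u : ℂ)) ∈ S :=
        ⟨u, hnu, fun k => rfl⟩
      have hposu : 0 ≤ ((inner ℂ (A u) u : ℂ)).re := by
        rw [hrey]
        exact hfpos _ hmem
      have hyu : y = (‖y‖ : ℂ) • u := by
        rw [hu, smul_smul, mul_inv_cancel₀ hny, one_smul]
      rw [hyu, map_smul, inner_smul_left, inner_smul_right, Complex.conj_ofReal, ← mul_assoc,
        ← Complex.ofReal_mul, Complex.re_ofReal_mul]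
      exact mul_nonneg (mul_self_nonneg _) hposu
  have hAx0 : (inner ℂ (A x) x : ℂ) = 0 := by
    rw [hAy]
    apply Finset.sum_eq_zero
    intro k _
    rw [hx2 ((k : ℕ) + 1) (by omega) (by have := k.isLt; omega), mul_zero]
  have hkey : ∀ v : H, (inner ℂ (A x) v : ℂ) = - (inner ℂ x (A v) : ℂ) := by
    have hc : ∀ v : H, ((inner ℂ (A x) v : ℂ)).re + ((inner ℂ (A v) x : ℂ)).re = 0 := by
      intro v
      apply quad_aux (c := ((inner ℂ (A x) v : ℂ)).re + ((inner ℂ (A v) x : ℂ)).re)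
        (d := ((inner ℂ (A v) v : ℂ)).re) (hpos v)
      intro t
      have h0 := hpos (x + (t : ℂ) • v)
      have hexp : (inner ℂ (A (x + (t : ℂ) • v)) (x + (t : ℂ) • v) : ℂ)
          = inner ℂ (A x) x + (t : ℂ) * inner ℂ (A x) v + (t : ℂ) * inner ℂ (A v) x
            + ((t ^ 2 : ℝ) : ℂ) * inner ℂ (A v) v := by
        simp only [map_add, map_smul, inner_add_left, inner_add_right, inner_smul_left,
          inner_smul_right, Complex.conj_ofReal]
        push_cast
        ring
      rw [hexp, hAx0] at h0
      simp only [Complex.add_re, Complex.re_ofReal_mul, Complex.zero_re] at h0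
      ring_nf at h0 ⊢
      linarith
    intro v
    have hr1 := hc v
    have hr2 := hc (Complex.I • v)
    simp only [map_smul, inner_smul_right, inner_smul_left, Complex.conj_I, Complex.mul_re,
      Complex.I_re, Complex.I_im, Complex.neg_re, Complex.neg_im, zero_mul, one_mul,
      zero_sub, neg_neg, neg_mul] at hr2
    have hcs : (inner ℂ x (A v) : ℂ) = (starRingEnd ℂ) (inner ℂ (A v) x : ℂ) :=
      (inner_conj_symm x (A v)).symm
    rw [hcs]
    apply Complex.ext
    · simp only [Complex.neg_re, Complex.conj_re]
      linarith
    · simp only [Complex.neg_im, Complex.conj_im, neg_neg]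
      linarith
  have horth : ∀ m : ℕ, m ≤ n → (inner ℂ (A x) ((T ^ m) x) : ℂ) = 0 := by
    intro m hm
    rw [hkey, neg_eq_zero, hAapp, inner_sum]
    apply Finset.sum_eq_zero
    intro k _
    rw [inner_smul_right]
    have hTT : (T ^ ((k : ℕ) + 1)) ((T ^ m) x) = (T ^ ((k : ℕ) + 1 + m)) x := by
      rw [← ContinuousLinearMap.mul_apply, ← pow_add]
    rw [hTT]
    have hz : (inner ℂ ((T ^ ((k : ℕ) + 1 + m)) x) x : ℂ) = 0 :=
      hx2 _ (by omega) (by have := k.isLt; omega)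
    have hz' : (inner ℂ x ((T ^ ((k : ℕ) + 1 + m)) x) : ℂ) = 0 := by
      rw [← inner_conj_symm, hz, map_zero]
    rw [hz', mul_zero]
  have hAxz : A x = 0 := by
    have hself : (inner ℂ (A x) (A x) : ℂ) = 0 := by
      nth_rewrite 2 [hAapp]
      rw [inner_sum]
      apply Finset.sum_eq_zero
      intro k _
      rw [inner_smul_right, horth ((k : ℕ) + 1) (by have := k.isLt; omega), mul_zero]
    exact inner_self_eq_zero.1 hself
  have hβne : ∃ k, β k ≠ 0 := by
    by_contra hall
    push_neg at hall
    apply hf0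
    apply LinearMap.ext
    intro w
    rw [hfw]
    simp only [LinearMap.zero_apply]
    apply Finset.sum_eq_zero
    intro k _
    have hr : f (e k) = 0 := by rw [← hβre k, hall k, Complex.zero_re]
    have hi : f (Complex.I • e k) = 0 := by rw [← hβim k, hall k, Complex.zero_im]
    rw [hr, hi, mul_zero, mul_zero, add_zero]
  obtain ⟨k₀, hk₀⟩ := hβne
  set p : Polynomial ℂ := ∑ k : Fin n, Polynomial.C (β k) * Polynomial.X ^ ((k : ℕ) + 1)
    with hpdef
  have hpc : p.coeff ((k₀ : ℕ) + 1) = β k₀ := by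
    rw [hpdef, Polynomial.finset_sum_coeff]
    rw [Finset.sum_eq_single k₀]
    · simp [Polynomial.coeff_C_mul, Polynomial.coeff_X_pow]
    · intro k _ hk
      rw [Polynomial.coeff_C_mul, Polynomial.coeff_X_pow, if_neg, mul_zero]
      intro hcontra
      exact hk (Fin.ext (by omega))
    · intro hcontra
      exact absurd (Finset.mem_univ k₀) hcontra
  have hpne : p ≠ 0 := fun h => hk₀ (by rw [← hpc, h, Polynomial.coeff_zero])
  have hpx : (Polynomial.aeval T p) x = 0 := by
    rw [hpdef, map_sum, ContinuousLinearMap.sum_apply]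
    have heval : ∀ k : Fin n,
        (Polynomial.aeval T (Polynomial.C (β k) * Polynomial.X ^ ((k : ℕ) + 1))) x
          = β k • ((T ^ ((k : ℕ) + 1)) x) := by
      intro k
      rw [map_mul, Polynomial.aeval_C, map_pow, Polynomial.aeval_X,
        Algebra.algebraMap_eq_smul_one, smul_mul_assoc, one_mul,
        ContinuousLinearMap.smul_apply]
    rw [Finset.sum_congr rfl fun k _ => heval k, ← hAapp, hAxz]
  have hxne : x ≠ 0 := by
    intro h
    rw [h, norm_zero] at hx1
    exact zero_ne_one hx1
  exact poly_eigen T p.natDegree p le_rfl hpne x hxne hpx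
end

section
/- Let H be a complex Hilbert space, T : H →L[ℂ] H. Suppose there exist complex numbers c₁,...,cₙ such that Re ⟨∑ⱼ cⱼTʲ u, u⟩ ≥ 0 for all u ∈ H, and suppose x is a unit vector with ⟨Tᵏx, x⟩ = 0 for k = 1,...,2n. Then Sx = 0, where S = ∑ⱼ cⱼTʲ. -/
/-- If `Re ⟨S u, u⟩ ≥ 0` for all `u`, where `S = ∑ⱼ cⱼ Tʲ`, and `x` is a
unit vector with `⟨Tᵏ x, x⟩ = 0` for `k = 1, ..., 2n`, then `S x = 0`. -/
theorem stmt1 {H : Type*} [NormedAddCommGroup H] [InnerProductSpace ℂ H]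
    (T : H →L[ℂ] H) (n : ℕ) (c : Fin n → ℂ) (S : H →L[ℂ] H)
    (hS : S = ∑ j : Fin n, c j • T ^ ((j : ℕ) + 1))
    (hpos : ∀ u : H, 0 ≤ (inner ℂ (S u) u : ℂ).re)
    (x : H) (hx : ‖x‖ = 1)
    (horth : ∀ k : ℕ, 1 ≤ k → k ≤ 2 * n → (inner ℂ ((T ^ k) x) x : ℂ) = 0) :
    S x = 0 := by
  have hpow : ∀ (p q : ℕ) (v : H), (T ^ p) ((T ^ q) v) = (T ^ (p + q)) v := by
    intro p q v
    rw [pow_add, ContinuousLinearMap.mul_apply]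
  have hSapp : ∀ v : H, S v = ∑ j : Fin n, c j • (T ^ ((j : ℕ) + 1)) v := by
    intro v
    rw [hS]
    simp [ContinuousLinearMap.sum_apply]
  have key : ∀ m : ℕ, m ≤ n → (inner ℂ ((T ^ m) (S x)) x : ℂ) = 0 := by
    intro m hm
    rw [hSapp x, map_sum, sum_inner]
    refine Finset.sum_eq_zero fun k _ => ?_
    have hk := k.2
    rw [map_smul, inner_smul_left, hpow, horth (m + ((k : ℕ) + 1)) (by omega) (by omega),
      mul_zero]
  have hSxx : (inner ℂ (S x) x : ℂ) = 0 := by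
    have := key 0 (Nat.zero_le n)
    simpa using this
  have hSSxx : (inner ℂ (S (S x)) x : ℂ) = 0 := by
    rw [hSapp (S x), sum_inner]
    refine Finset.sum_eq_zero fun j _ => ?_
    have hj := j.2
    rw [inner_smul_left, key ((j : ℕ) + 1) (by omega), mul_zero]
  set a : ℝ := ‖S x‖ ^ 2 with ha
  set b : ℝ := (inner ℂ (S (S x)) (S x) : ℂ).re with hb
  have hexp : ∀ t : ℝ, 0 ≤ t * a + t ^ 2 * b := by
    intro t
    have h := hpos (x + (t : ℂ) • S x)
    rw [map_add, map_smul, inner_add_left, inner_add_right, inner_add_right,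
      inner_smul_left, inner_smul_right, inner_smul_left, inner_smul_right,
      hSxx, hSSxx] at h
    have hnorm : (inner ℂ (S x) (S x) : ℂ) = (a : ℂ) := by
      rw [ha]; exact_mod_cast inner_self_eq_norm_sq_to_K (𝕜 := ℂ) (S x)
    rw [hnorm] at h
    simp only [Complex.add_re, Complex.mul_re, Complex.conj_re, Complex.conj_im,
      Complex.ofReal_re, Complex.ofReal_im, Complex.zero_re, Complex.zero_im] at h
    nlinarith [h]
  have ha0 : 0 ≤ a := by positivity
  have haz : a = 0 := by
    by_contra hne
    have hapos : 0 < a := lt_of_le_of_ne ha0 (Ne.symm hne)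
    rcases le_or_gt b 0 with hb0 | hb0
    · have := hexp (-1); nlinarith
    · have h1 := hexp (-(a / (2 * b)))
      have hb' : b ≠ 0 := ne_of_gt hb0
      have hval : -(a / (2 * b)) * a + (-(a / (2 * b))) ^ 2 * b = -a ^ 2 / (4 * b) := by
        field_simp; ring
      rw [hval] at h1
      rcases div_nonneg_iff.mp h1 with ⟨h2, _⟩ | ⟨_, h3⟩
      · nlinarith
      · linarith
  have hz : ‖S x‖ = 0 := by nlinarith [norm_nonneg (S x)]
  exact norm_eq_zero.mp hz
end

section
/- Let H be a complex Hilbert space and let u₁, ..., uₙ ∈ H be linearly independent vectors. Let α₁, ..., αₙ be nonnegative real numbers with ∑ₖ αₖ = 1. Then there exist complex numbers w₁, ..., wₙ such that the vector u = ∑ⱼ wⱼuⱼ satisfies ‖u‖ ≤ 1 and ⟨wⱼuⱼ, u⟩ = αⱼ for every j = 1, ..., n. (Zenger's Lemma) -/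
open Finset in
theorem zenger_core {ι : Type*} [Fintype ι] [DecidableEq ι] {H : Type*} [NormedAddCommGroup H]
    [InnerProductSpace ℂ H] (u : ι → H) (hu : LinearIndependent ℂ u)
    (α : ι → ℝ) (hα : ∀ j, 0 < α j) (hsum : ∑ j, α j = 1) :
    ∃ w : ι → ℂ, ‖∑ j, w j • u j‖ ≤ 1 ∧
      ∀ j, (inner ℂ (w j • u j) (∑ i, w i • u i) : ℂ) = (α j : ℂ) := by
  rcases isEmpty_or_nonempty ι with hι | hι
  · simp at hsum
  set L : (ι → ℂ) →ₗ[ℂ] H := Fintype.linearCombination ℂ u with hL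
  have hLapp : ∀ z : ι → ℂ, L z = ∑ j, z j • u j := fun z => rfl
  have hker : LinearMap.ker L = ⊥ := by
    rw [LinearMap.ker_eq_bot']
    intro z hz
    funext j
    exact Fintype.linearIndependent_iff.1 hu z hz j
  have hLcont : Continuous L := L.continuous_of_finiteDimensional
  obtain ⟨Kc, hKc0, hKlip⟩ := L.exists_antilipschitzWith hker
  set K : Set (ι → ℂ) := {z | ‖L z‖ ≤ 1} with hKdef
  have hKclosed : IsClosed K := isClosed_le (hLcont.norm) continuous_const
  have hKsub : K ⊆ Metric.closedBall 0 Kc := by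
    intro z hz
    have := hKlip.le_mul_dist z 0
    simp only [map_zero, dist_zero_right] at this
    have hz1 : ‖L z‖ ≤ 1 := hz
    simpa [Metric.mem_closedBall, dist_zero_right] using
      this.trans (by nlinarith [Kc.coe_nonneg] : (Kc : ℝ) * ‖L z‖ ≤ Kc)
  have hKcompact : IsCompact K :=
    (isCompact_closedBall 0 Kc).of_isClosed_subset hKclosed hKsub
  set φ : (ι → ℂ) → ℝ := fun z => ∏ j, ‖z j‖ ^ (2 * α j) with hφ
  have hφcont : Continuous φ := by
    apply continuous_finset_prod
    intro j _
    exact (continuous_norm.comp (continuous_apply j)).rpow_const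
      (fun x => Or.inr (by linarith [hα j]))
  have h0K : (0 : ι → ℂ) ∈ K := by simp [hKdef]
  obtain ⟨c, hcK, hcmax⟩ := hKcompact.exists_isMaxOn ⟨0, h0K⟩ hφcont.continuousOn
  set M := φ c with hM
  -- homogeneity
  have hhom : ∀ t : ℝ, 0 < t → ∀ z : ι → ℂ, φ ((t : ℂ) • z) = t ^ 2 * φ z := by
    intro t ht z
    have : ∀ j, ‖((t:ℂ) • z) j‖ ^ (2 * α j) = t ^ (2 * α j) * ‖z j‖ ^ (2 * α j) := by
      intro j
      rw [Pi.smul_apply, norm_smul, Complex.norm_real, Real.norm_of_nonneg ht.le,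
        Real.mul_rpow ht.le (norm_nonneg _)]
    simp only [hφ, this, Finset.prod_mul_distrib]
    congr 1
    rw [← Real.rpow_natCast t 2, ← Real.rpow_sum_of_pos ht]
    congr 1
    rw [← Finset.mul_sum, hsum]
    norm_num
  -- positivity of M
  have hMpos : 0 < M := by
    have hone : ∀ x : ι, (fun _ : ι => (1:ℂ)) x = 1 := fun _ => rfl
    set one : ι → ℂ := fun _ => 1 with honedef
    set r : ℝ := (1 + ‖L one‖)⁻¹ with hr
    have hrpos : 0 < r := by positivity
    have hz0K : ((r : ℂ) • one : ι → ℂ) ∈ K := by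
      simp only [hKdef, Set.mem_setOf_eq, map_smul, norm_smul, Complex.norm_real,
        Real.norm_of_nonneg hrpos.le]
      rw [hr, inv_mul_le_iff₀ (by positivity)]
      nlinarith [norm_nonneg (L one)]
    refine lt_of_lt_of_le ?_ (hcmax hz0K)
    rw [hhom r hrpos]
    have : φ one = 1 := by
      simp [hφ, honedef]
    rw [this]
    positivity
  have hcne : ∀ j, c j ≠ 0 := by
    intro j hj
    have : φ c = 0 := by
      apply Finset.prod_eq_zero (Finset.mem_univ j)
      rw [hj, norm_zero, Real.zero_rpow (ne_of_gt (by linarith [hα j]))]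
    exact absurd this (by rw [← hM]; exact hMpos.ne')
  have hLc1 : ‖L c‖ = 1 := by
    by_contra hne
    have hlt : ‖L c‖ < 1 := lt_of_le_of_ne hcK hne
    have hLcpos : 0 < ‖L c‖ := by
      rw [norm_pos_iff]
      intro h0
      have : c = 0 := by
        have := LinearMap.ker_eq_bot.1 hker
        exact this (by simpa using h0)
      exact hcne (Classical.arbitrary ι) (by rw [this]; rfl)
    set s := ‖L c‖
    have hmem : ((s⁻¹ : ℝ) : ℂ) • c ∈ K := by
      simp only [hKdef, Set.mem_setOf_eq, map_smul, norm_smul, Complex.norm_real,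
        Real.norm_of_nonneg (inv_nonneg.2 hLcpos.le)]
      rw [inv_mul_cancel₀ hLcpos.ne']
    have h2 : φ (((s⁻¹ : ℝ) : ℂ) • c) ≤ M := hcmax hmem
    rw [hhom _ (inv_pos.2 hLcpos)] at h2
    have hs1 : 1 < s⁻¹ := by
      rw [lt_inv_comm₀ zero_lt_one hLcpos]
      simpa using hlt
    rw [← hM] at h2
    have h3 : (1:ℝ) < s⁻¹ ^ 2 := by nlinarith [hs1]
    nlinarith [mul_lt_mul_of_pos_right h3 hMpos]
  -- global inequality
  have hglob : ∀ z : ι → ℂ, φ z ≤ M * ‖L z‖ ^ 2 := by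
    intro z
    rcases eq_or_ne (L z) 0 with h0 | h0
    · have hz0 : z = 0 := LinearMap.ker_eq_bot.1 hker (by simpa using h0)
      have : φ z = 0 := by
        rw [hz0]
        apply Finset.prod_eq_zero (Finset.mem_univ (Classical.arbitrary ι))
        rw [Pi.zero_apply, norm_zero,
          Real.zero_rpow (ne_of_gt (by linarith [hα (Classical.arbitrary ι)]))]
      rw [this, h0]
      simp
    · have hzpos : 0 < ‖L z‖ := norm_pos_iff.2 h0
      have hmem : ((‖L z‖⁻¹ : ℝ) : ℂ) • z ∈ K := by
        simp only [hKdef, Set.mem_setOf_eq, map_smul, norm_smul, Complex.norm_real,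
          Real.norm_of_nonneg (inv_nonneg.2 hzpos.le)]
        rw [inv_mul_cancel₀ hzpos.ne']
      have h2 : φ (((‖L z‖⁻¹ : ℝ) : ℂ) • z) ≤ M := hcmax hmem
      rw [hhom _ (inv_pos.2 hzpos)] at h2
      calc φ z = ‖L z‖^2 * ((‖L z‖⁻¹)^2 * φ z) := by field_simp
        _ ≤ ‖L z‖^2 * M := by nlinarith [hzpos, h2]
        _ = M * ‖L z‖^2 := mul_comm _ _
  -- key variational identity
  have key : ∀ γ : ι → ℂ, (inner ℂ (L c) (L (fun j => γ j * c j)) : ℂ).re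
      = ∑ j, α j * (γ j).re := by
    intro γ
    set v := L (fun j => γ j * c j) with hv
    set R : ℝ := (inner ℂ (L c) v : ℂ).re with hR
    set q : ι → ℝ → ℝ := fun j t => 1 + (2 * t * (γ j).re + t ^ 2 * ‖γ j‖ ^ 2) with hq
    have hqnorm : ∀ j (t : ℝ), ‖(1:ℂ) + (t:ℂ) * γ j‖ ^ 2 = q j t := by
      intro j t
      simp only [hq, Complex.sq_norm, Complex.normSq_apply,
        Complex.add_re, Complex.add_im, Complex.mul_re, Complex.mul_im, Complex.one_re,
        Complex.one_im, Complex.ofReal_re, Complex.ofReal_im]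
      ring
    set G : ℝ → ℝ := fun t => ∏ j, (q j t) ^ (α j) with hG
    set Hf : ℝ → ℝ := fun t => 1 + (2 * R * t + ‖v‖ ^ 2 * t ^ 2) with hHf
    have hq0 : ∀ j, q j 0 = 1 := by intro j; simp [hq]
    have hGle : ∀ t : ℝ, G t ≤ Hf t := by
      intro t
      have hz := hglob (c + (t:ℂ) • fun j => γ j * c j)
      have hφz : φ (c + (t:ℂ) • fun j => γ j * c j) = M * G t := by
        have hfac : ∀ j, ‖(c + (t:ℂ) • fun j => γ j * c j) j‖ ^ (2 * α j)
            = ‖c j‖ ^ (2 * α j) * (q j t) ^ (α j) := by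
          intro j
          have hc : (c + (t:ℂ) • fun j => γ j * c j) j = c j * (1 + (t:ℂ) * γ j) := by
            simp; ring
          rw [hc, norm_mul, Real.mul_rpow (norm_nonneg _) (norm_nonneg _)]
          congr 1
          rw [Real.rpow_mul (norm_nonneg _), show ((2:ℝ)) = ((2:ℕ):ℝ) by norm_num,
            Real.rpow_natCast, hqnorm j t]
        calc φ (c + (t:ℂ) • fun j => γ j * c j)
            = ∏ j, (‖c j‖ ^ (2 * α j) * (q j t) ^ (α j)) :=
              Finset.prod_congr rfl (fun j _ => hfac j)
          _ = (∏ j, ‖c j‖ ^ (2 * α j)) * ∏ j, (q j t) ^ (α j) := Finset.prod_mul_distrib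
          _ = M * G t := rfl
      have hnorm : ‖L (c + (t:ℂ) • fun j => γ j * c j)‖ ^ 2 = Hf t := by
        rw [map_add, map_smul, ← hv]
        rw [@norm_add_sq ℂ]
        rw [inner_smul_right, hLc1]
        simp only [RCLike.re_to_complex, norm_smul, Complex.norm_real, Real.norm_eq_abs,
          Complex.mul_re, Complex.ofReal_re, Complex.ofReal_im, zero_mul, sub_zero,
          mul_pow, sq_abs, hHf, ← hR]
        ring
      rw [hφz, hnorm] at hz
      exact le_of_mul_le_mul_left hz hMpos
    have hG0 : G 0 = 1 := by
      simp only [hG]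
      rw [Finset.prod_eq_one]
      intro j _
      rw [hq0 j, Real.one_rpow]
    have hHf0 : Hf 0 = 1 := by simp [hHf]
    have hGd : HasDerivAt G (∑ j, α j * (2 * (γ j).re)) 0 := by
      have hjd : ∀ j ∈ Finset.univ, HasDerivAt (fun t => (q j t) ^ (α j))
          (α j * (2 * (γ j).re)) 0 := by
        intro j _
        have h1 : HasDerivAt (fun t : ℝ => t ^ 2 * ‖γ j‖ ^ 2) 0 0 := by
          simpa using (hasDerivAt_pow 2 (0:ℝ)).mul_const (‖γ j‖ ^ 2)
        have h2 : HasDerivAt (fun t : ℝ => 2 * t * (γ j).re) (2 * (γ j).re) 0 := by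
          have := ((hasDerivAt_id (0:ℝ)).const_mul 2).mul_const ((γ j).re)
          simpa [mul_comm, mul_assoc] using this
        have hqd : HasDerivAt (q j) (2 * (γ j).re) 0 := by
          have := (h2.add h1).const_add 1
          simpa [hq] using this
        have := hqd.rpow_const (p := α j) (Or.inl (by rw [hq0 j]; norm_num))
        simpa [hq0 j, Real.one_rpow, mul_comm, mul_assoc] using this
      have h := HasDerivAt.fun_finsetProd hjd
      simpa [hq0, Real.one_rpow] using h
    have hHd : HasDerivAt Hf (2 * R) 0 := by
      have h1 : HasDerivAt (fun t : ℝ => ‖v‖ ^ 2 * t ^ 2) 0 0 := by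
        simpa using (hasDerivAt_pow 2 (0:ℝ)).const_mul (‖v‖ ^ 2)
      have h2 : HasDerivAt (fun t : ℝ => 2 * R * t) (2 * R) 0 := by
        have := (hasDerivAt_id (0:ℝ)).const_mul (2 * R)
        simpa [mul_comm, mul_assoc] using this
      have := (h2.add h1).const_add 1
      simpa [hHf] using this
    have hmin : IsLocalMin (fun t => Hf t - G t) 0 :=
      Filter.Eventually.of_forall (fun t => by
        simp only
        rw [hHf0, hG0]
        linarith [hGle t])
    have hzero := hmin.hasDerivAt_eq_zero (hHd.sub hGd)
    have h4 : 2 * R = ∑ j, α j * (2 * (γ j).re) := by linarith [hzero]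
    have h5 : ∑ j, α j * (2 * (γ j).re) = 2 * ∑ j, α j * (γ j).re := by
      rw [Finset.mul_sum]
      exact Finset.sum_congr rfl (fun j _ => by ring)
    rw [hR] at h4
    linarith [h4, h5]
  -- conclude
  refine ⟨c, ?_, ?_⟩
  · rw [← hLapp c]
    exact le_of_eq hLc1
  · intro k
    have hLsingle : ∀ x : ℂ, L (fun j => (Pi.single k x : ι → ℂ) j * c j) = x • (c k • u k) := by
      intro x
      rw [hLapp]
      rw [Finset.sum_eq_single k]
      · simp [smul_smul]
      · intro b _ hb
        simp [Pi.single_eq_of_ne hb]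
      · intro h
        exact absurd (Finset.mem_univ k) h
    have hsingle_sum : ∀ x : ℂ, (∑ j, α j * ((Pi.single k x : ι → ℂ) j).re) = α k * x.re := by
      intro x
      rw [Finset.sum_eq_single k]
      · rw [Pi.single_eq_same]
      · intro b _ hb
        rw [Pi.single_eq_of_ne hb]
        simp
      · intro h
        exact absurd (Finset.mem_univ k) h
    have h1 := key (Pi.single k 1)
    rw [hLsingle 1, one_smul, hsingle_sum 1] at h1
    simp only [Complex.one_re, mul_one] at h1
    have h2 := key (Pi.single k Complex.I)
    rw [hLsingle Complex.I, hsingle_sum Complex.I, inner_smul_right] at h2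
    simp only [Complex.I_re, mul_zero] at h2
    -- h1 : (inner (L c) (c k • u k)).re = α k
    -- h2 : (I * inner (L c) (c k • u k)).re = 0
    set δ : ℂ := inner ℂ (L c) (c k • u k) with hδ
    have him : δ.im = 0 := by
      have := h2
      rw [Complex.mul_re] at this
      simp only [Complex.I_re, Complex.I_im, zero_mul, one_mul] at this
      linarith
    have hδval : δ = (α k : ℂ) := by
      apply Complex.ext
      · simpa using h1
      · simpa using him
    rw [← hLapp]
    calc (inner ℂ (c k • u k) (L c) : ℂ)
        = starRingEnd ℂ (inner ℂ (L c) (c k • u k)) := (inner_conj_symm _ _).symm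
      _ = starRingEnd ℂ ((α k : ℂ)) := by rw [← hδ, hδval]
      _ = (α k : ℂ) := Complex.conj_ofReal _

/-- Zenger's Lemma: For linearly independent `u₁,...,uₙ` in a complex
Hilbert space and nonnegative `α₁,...,αₙ` summing to `1`, there exist complex numbers
`w₁,...,wₙ` so that `u = ∑ⱼ wⱼ uⱼ` satisfies `‖u‖ ≤ 1` and `⟨wⱼ uⱼ, u⟩ = αⱼ` for all `j`. -/
theorem stmt3 {H : Type*} [NormedAddCommGroup H] [InnerProductSpace ℂ H]
    (n : ℕ) (u : Fin n → H) (hu : LinearIndependent ℂ u)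
    (α : Fin n → ℝ) (hα : ∀ j, 0 ≤ α j) (hsum : ∑ j, α j = 1) :
    ∃ w : Fin n → ℂ, ‖∑ j, w j • u j‖ ≤ 1 ∧
      ∀ j, (inner ℂ (w j • u j) (∑ i, w i • u i) : ℂ) = (α j : ℂ) := by
  classical
  have hu' : LinearIndependent ℂ (fun j : {j : Fin n // 0 < α j} => u j.val) :=
    hu.comp _ Subtype.val_injective
  have hsum' : ∑ j : {j : Fin n // 0 < α j}, α j.val = 1 := by
    rw [← hsum]
    rw [← Finset.sum_subtype (Finset.univ.filter (fun j => 0 < α j))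
      (fun j => by simp) (fun j => α j)]
    apply Finset.sum_filter_of_ne
    intro x _ hx
    exact lt_of_le_of_ne (hα x) (Ne.symm hx)
  obtain ⟨w', hw1, hw2⟩ := zenger_core (fun j : {j : Fin n // 0 < α j} => u j.val) hu'
    (fun j => α j.val) (fun j => j.prop) hsum'
  set w : Fin n → ℂ := fun j => if h : 0 < α j then w' ⟨j, h⟩ else 0 with hw
  have hsumw : (∑ j, w j • u j) = ∑ j : {j : Fin n // 0 < α j}, w' j • u j.val := by
    calc ∑ j, w j • u j
        = ∑ j ∈ Finset.univ.filter (fun j => 0 < α j), w j • u j := by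
          symm
          apply Finset.sum_filter_of_ne
          intro x _ hx
          by_contra hneg
          apply hx
          rw [hw]
          simp only [dif_neg hneg, zero_smul]
      _ = ∑ j : {j : Fin n // 0 < α j}, w j.val • u j.val :=
          Finset.sum_subtype _ (fun j => by simp) _
      _ = ∑ j : {j : Fin n // 0 < α j}, w' j • u j.val := by
          apply Finset.sum_congr rfl
          intro j _
          congr 1
          rw [hw]
          simp only [dif_pos j.prop]
  refine ⟨w, ?_, ?_⟩
  · rw [hsumw]; exact hw1
  · intro j
    rcases lt_or_eq_of_le (hα j) with h | h
    · have := hw2 ⟨j, h⟩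
      rw [hsumw]
      have hwj : w j = w' ⟨j, h⟩ := by rw [hw]; simp only [dif_pos h]
      rw [hwj]
      exact this
    · have hnot : ¬ 0 < α j := by rw [← h]; exact lt_irrefl 0
      have hwj : w j = 0 := by rw [hw]; simp only [dif_neg hnot]
      rw [hwj, zero_smul, inner_zero_left, ← h]
      norm_num
end

section
/- Let H be an infinite-dimensional complex Hilbert space and 𝒯 = (T₁,...,Tₙ) a tuple of bounded operators on H. If λ = (λ₁,...,λₙ) ∈ ℂⁿ is such that for every closed subspace M ⊆ H of finite codimension there exists a unit vector x ∈ M with ⟨Tⱼx, x⟩ = λⱼ for all j, then there exists an infinite-dimensional closed subspace L ⊆ H such that P_L Tⱼ P_L = λⱼ P_L for all j = 1,...,n, where P_L is the orthogonal projection onto L. -/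
open scoped InnerProductSpace ComplexConjugate

section Aux
variable {H : Type*} [NormedAddCommGroup H] [InnerProductSpace ℂ H] [CompleteSpace H]

/-- Step lemma: given a finite tuple, find a new unit vector orthogonal to the tuple and
to its images under the `T j` and their adjoints, realizing the inner ℂ products `l j`. -/
lemma stmt4_step (n : ℕ) (T : Fin n → H →L[ℂ] H) (l : Fin n → ℂ)
    (h : ∀ M : Submodule ℂ H, IsClosed (M : Set H) → FiniteDimensional ℂ ↥Mᗮ →
      ∃ x ∈ M, ‖x‖ = 1 ∧ ∀ j, (inner ℂ ((T j) x) x : ℂ) = l j)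
    (k : ℕ) (v : Fin k → H) :
    ∃ x : H, ‖x‖ = 1 ∧ (∀ i, (inner ℂ (v i) x : ℂ) = 0) ∧
      (∀ i j, (inner ℂ (T j (v i)) x : ℂ) = 0) ∧
      (∀ i j, (inner ℂ ((ContinuousLinearMap.adjoint (T j)) (v i)) x : ℂ) = 0) ∧
      (∀ j, (inner ℂ (T j x) x : ℂ) = l j) := by
  set s : Set H := Set.range v ∪ Set.range (fun p : Fin k × Fin n => T p.2 (v p.1)) ∪
      Set.range (fun p : Fin k × Fin n => (ContinuousLinearMap.adjoint (T p.2)) (v p.1)) with hs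
  have hsfin : s.Finite := by
    apply Set.Finite.union
    apply Set.Finite.union
    all_goals exact Set.finite_range _
  set S : Submodule ℂ H := Submodule.span ℂ s with hS
  have hSfd : FiniteDimensional ℂ ↥S := FiniteDimensional.span_of_finite ℂ hsfin
  have hSclosed : IsClosed (S : Set H) := S.closed_of_finiteDimensional
  have horth : Sᗮᗮ = S := by
    rw [Submodule.orthogonal_orthogonal_eq_closure,
      hSclosed.submodule_topologicalClosure_eq]
  have hfd : FiniteDimensional ℂ ↥Sᗮᗮ := by rw [horth]; exact hSfd
  obtain ⟨x, hxM, hx1, hxl⟩ := h Sᗮ S.isClosed_orthogonal hfd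
  have hmem : ∀ u ∈ s, (inner ℂ u x : ℂ) = 0 := fun u hu =>
    (Submodule.mem_orthogonal S x).mp hxM u (Submodule.subset_span hu)
  refine ⟨x, hx1, ?_, ?_, ?_, hxl⟩
  · exact fun i => hmem _ (Or.inl (Or.inl ⟨i, rfl⟩))
  · exact fun i j => hmem _ (Or.inl (Or.inr ⟨(i, j), rfl⟩))
  · exact fun i j => hmem _ (Or.inr ⟨(i, j), rfl⟩)

end Aux

/-- If for every closed subspace `M` of finite codimension there is a unit
vector `x ∈ M` with `⟨Tⱼ x, x⟩ = λⱼ` for all `j`, then there is an infinite-dimensional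
closed subspace `L` with `P_L Tⱼ P_L = λⱼ P_L` for all `j`.  The operator identity
`P_L Tⱼ P_L = λⱼ P_L` is expressed equivalently as
`⟨Tⱼ x, y⟩ = λⱼ ⟨x, y⟩` for all `x, y ∈ L`. -/
theorem stmt4 {H : Type*} [NormedAddCommGroup H] [InnerProductSpace ℂ H] [CompleteSpace H]
    (hinf : ¬ FiniteDimensional ℂ H)
    (n : ℕ) (T : Fin n → H →L[ℂ] H) (l : Fin n → ℂ)
    (h : ∀ M : Submodule ℂ H, IsClosed (M : Set H) → FiniteDimensional ℂ ↥Mᗮ →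
      ∃ x ∈ M, ‖x‖ = 1 ∧ ∀ j, (inner ℂ ((T j) x) x : ℂ) = l j) :
    ∃ L : Submodule ℂ H, IsClosed (L : Set H) ∧ ¬ FiniteDimensional ℂ ↥L ∧
      ∀ j, ∀ x ∈ L, ∀ y ∈ L, (inner ℂ ((T j) x) y : ℂ) = l j * inner ℂ x y := by
  classical
  choose F hF1 hF2 hF3 hF4 hF5 using stmt4_step n T l h
  -- the recursively defined tuples
  let g : ∀ k : ℕ, Fin k → H := fun k =>
    Nat.rec (motive := fun k => Fin k → H) (fun i => i.elim0)
      (fun k v => Fin.snoc v (F k v)) k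
  have hgsucc : ∀ k, g (k + 1) = Fin.snoc (g k) (F k (g k)) := fun k => rfl
  -- the sequence
  set x : ℕ → H := fun k => g (k + 1) (Fin.last k) with hxdef
  have hxk : ∀ k, x k = F k (g k) := by
    intro k; rw [hxdef]; simp [hgsucc k, Fin.snoc_last]
  have hg : ∀ k (i : Fin k), g k i = x i.1 := by
    intro k
    induction k with
    | zero => exact fun i => i.elim0
    | succ k ih =>
      intro i
      refine Fin.lastCases ?_ ?_ i
      · rfl
      · intro i
        rw [hgsucc k, Fin.snoc_castSucc, ih i]
        rfl
  -- properties of the sequence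
  have hnorm : ∀ k, ‖x k‖ = 1 := fun k => by rw [hxk k]; exact hF1 k (g k)
  have hself : ∀ k, (inner ℂ (x k) (x k) : ℂ) = 1 := fun k => by
    rw [inner_self_eq_norm_sq_to_K, hnorm k]; norm_num
  have horth : ∀ k, ∀ i : Fin k, (inner ℂ (x i.1) (x k) : ℂ) = 0 := fun k i => by
    rw [hxk k, ← hg k i]; exact hF2 k (g k) i
  have horth' : ∀ k, ∀ i : Fin k, (inner ℂ (x k) (x i.1) : ℂ) = 0 := fun k i => by
    rw [← inner_conj_symm, horth k i, map_zero]
  have hT1 : ∀ k, ∀ i : Fin k, ∀ j, (inner ℂ (T j (x i.1)) (x k) : ℂ) = 0 := fun k i j => by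
    rw [hxk k, ← hg k i]; exact hF3 k (g k) i j
  have hT2 : ∀ k, ∀ i : Fin k, ∀ j, (inner ℂ (T j (x k)) (x i.1) : ℂ) = 0 := fun k i j => by
    have h4 := hF4 k (g k) i j
    rw [hg k i, ContinuousLinearMap.adjoint_inner_left, ← hxk k] at h4
    rw [← inner_conj_symm, h4, map_zero]
  have hdiag : ∀ k j, (inner ℂ (T j (x k)) (x k) : ℂ) = l j := fun k j => by
    rw [hxk k]; exact hF5 k (g k) j
  -- orthonormality
  have horthnorm : Orthonormal ℂ x := by
    rw [orthonormal_iff_ite]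
    intro i j
    rcases lt_trichotomy i j with hij | hij | hij
    · rw [if_neg hij.ne, horth j ⟨i, hij⟩]
    · subst hij; rw [if_pos rfl, hself]
    · rw [if_neg hij.ne', horth' i ⟨j, hij⟩]
  -- the key inner ℂ product identity on the generators
  have hkey : ∀ j (i i' : ℕ),
      (inner ℂ (T j (x i)) (x i') : ℂ) = l j * inner ℂ (x i) (x i') := by
    intro j i i'
    rcases lt_trichotomy i i' with hii | hii | hii
    · rw [hT1 i' ⟨i, hii⟩ j, horth i' ⟨i, hii⟩, mul_zero]
    · subst hii; rw [hdiag i j, hself, mul_one]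
    · rw [hT2 i ⟨i', hii⟩ j, horth' i ⟨i', hii⟩, mul_zero]
  -- the subspace
  refine ⟨(Submodule.span ℂ (Set.range x)).topologicalClosure,
    Submodule.isClosed_topologicalClosure _, ?_, ?_⟩
  · intro hfd
    have hmem : ∀ k, x k ∈ (Submodule.span ℂ (Set.range x)).topologicalClosure := fun k =>
      Submodule.le_topologicalClosure _ (Submodule.subset_span ⟨k, rfl⟩)
    have hon : Orthonormal ℂ (fun k =>
        (⟨x k, hmem k⟩ : (Submodule.span ℂ (Set.range x)).topologicalClosure)) :=
      horthnorm.codRestrict _ hmem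
    haveI := hon.linearIndependent.finite
    exact not_finite ℕ
  · intro j a ha b hb
    -- first, on the span
    have hspan : ∀ a ∈ Submodule.span ℂ (Set.range x), ∀ b ∈ Submodule.span ℂ (Set.range x),
        (inner ℂ (T j a) b : ℂ) = l j * inner ℂ a b := by
      intro a ha b hb
      induction ha, hb using Submodule.span_induction₂ with
      | mem_mem u v hu hv =>
        obtain ⟨i, rfl⟩ := hu; obtain ⟨i', rfl⟩ := hv; exact hkey j i i'
      | zero_left v hv => simp
      | zero_right u hu => simp
      | add_left u v w hu hv hw h1 h2 =>
        rw [map_add, inner_add_left, inner_add_left, h1, h2]; ring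
      | add_right u v w hu hv hw h1 h2 =>
        rw [inner_add_right, inner_add_right, h1, h2]; ring
      | smul_left c u v hu hv h1 =>
        rw [map_smul, inner_smul_left, inner_smul_left, h1]; ring
      | smul_right c u v hu hv h1 =>
        rw [inner_smul_right, inner_smul_right, h1]; ring
    -- closure in the second variable
    have hcl2 : ∀ a ∈ Submodule.span ℂ (Set.range x),
        ∀ b ∈ (Submodule.span ℂ (Set.range x)).topologicalClosure,
        (inner ℂ (T j a) b : ℂ) = l j * inner ℂ a b := by
      intro a ha b hb
      have hb' : b ∈ closure ((Submodule.span ℂ (Set.range x) : Submodule ℂ H) : Set H) := by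
        rw [← Submodule.topologicalClosure_coe]; exact hb
      have hcont : Continuous fun y : H => (inner ℂ (T j a) y : ℂ) - l j * inner ℂ a y := by
        apply Continuous.sub
        · exact Continuous.inner continuous_const continuous_id
        · exact Continuous.mul continuous_const (Continuous.inner continuous_const continuous_id)
      have heq : Set.EqOn (fun y : H => (inner ℂ (T j a) y : ℂ) - l j * inner ℂ a y) 0
          ((Submodule.span ℂ (Set.range x) : Submodule ℂ H) : Set H) := fun y hy => by
        simp only [Pi.zero_apply, sub_eq_zero]
        exact hspan a ha y hy
      have h0 := (heq.closure hcont continuous_const) hb'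
      simpa [sub_eq_zero] using h0
    -- closure in the first variable
    have ha' : a ∈ closure ((Submodule.span ℂ (Set.range x) : Submodule ℂ H) : Set H) := by
      rw [← Submodule.topologicalClosure_coe]; exact ha
    have hcont : Continuous fun y : H => (inner ℂ (T j y) b : ℂ) - l j * inner ℂ y b := by
      apply Continuous.sub
      · exact Continuous.inner ((T j).continuous) continuous_const
      · exact Continuous.mul continuous_const (Continuous.inner continuous_id continuous_const)
    have heq : Set.EqOn (fun y : H => (inner ℂ (T j y) b : ℂ) - l j * inner ℂ y b) 0
        ((Submodule.span ℂ (Set.range x) : Submodule ℂ H) : Set H) := fun y hy => by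
      simp only [Pi.zero_apply, sub_eq_zero]
      exact hcl2 y hy b hb
    have h0 := (heq.closure hcont continuous_const) ha'
    simpa [sub_eq_zero] using h0
end

section
/- Let H be an infinite-dimensional complex Hilbert space, 𝒯 = (T₁,...,Tₙ) a tuple of bounded operators, and suppose λ ∈ ℂⁿ belongs to W_k(𝒯) for every k ∈ ℕ, where W_k(𝒯) is the rank-k numerical range. Then for every closed subspace M ⊆ H of finite codimension there exists a unit vector x ∈ M with ⟨Tⱼx, x⟩ = λⱼ for all j = 1,...,n. -/
/-- If `λ ∈ W_k(𝒯)` for every `k ∈ ℕ` (the rank-`k` numerical range,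
encoded via: there is a `k`-dimensional subspace `F` with `P_F Tⱼ P_F = λⱼ P_F`,
i.e. `⟨Tⱼ x, y⟩ = λⱼ ⟨x, y⟩` for all `x, y ∈ F`), then for every closed subspace `M`
of finite codimension there is a unit vector `x ∈ M` with `⟨Tⱼ x, x⟩ = λⱼ` for all `j`. -/
theorem stmt5 {H : Type*} [NormedAddCommGroup H] [InnerProductSpace ℂ H] [CompleteSpace H]
    (hinf : ¬ FiniteDimensional ℂ H)
    (n : ℕ) (T : Fin n → H →L[ℂ] H) (l : Fin n → ℂ)
    (h : ∀ k : ℕ, ∃ F : Submodule ℂ H, FiniteDimensional ℂ ↥F ∧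
      Module.finrank ℂ ↥F = k ∧
      ∀ j, ∀ x ∈ F, ∀ y ∈ F, (inner ℂ ((T j) x) y : ℂ) = l j * inner ℂ x y) :
    ∀ M : Submodule ℂ H, IsClosed (M : Set H) → FiniteDimensional ℂ ↥Mᗮ →
      ∃ x ∈ M, ‖x‖ = 1 ∧ ∀ j, (inner ℂ ((T j) x) x : ℂ) = l j := by
  intro M hMclosed hMfin
  haveI : CompleteSpace M := hMclosed.completeSpace_coe
  set m := Module.finrank ℂ ↥Mᗮ with hm
  obtain ⟨F, hFfin, hFrank, hF⟩ := h (m + 1)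
  -- the projection to Mᗮ restricted to F cannot be injective
  let f : F →ₗ[ℂ] Mᗮ := (Submodule.orthogonalProjectionOnto Mᗮ).toLinearMap.comp F.subtype
  have hnotinj : ¬ Function.Injective f := by
    intro hinj
    have := LinearMap.finrank_le_finrank_of_injective hinj
    omega
  rw [← LinearMap.ker_eq_bot] at hnotinj
  obtain ⟨x, hxker, hxne⟩ := (Submodule.ne_bot_iff _).mp hnotinj
  have hxM : (x : H) ∈ M := by
    have hproj : Submodule.orthogonalProjectionOnto Mᗮ (x : H) = 0 := hxker
    have : (x : H) ∈ Mᗮᗮ := by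
      rwa [Submodule.orthogonalProjectionOnto_eq_zero_iff] at hproj
    rwa [Submodule.orthogonal_orthogonal] at this
  have hxne' : (x : H) ≠ 0 := fun hc => hxne (Subtype.ext hc)
  have hnorm : ‖(x : H)‖ ≠ 0 := norm_ne_zero_iff.mpr hxne'
  set c : ℂ := (‖(x : H)‖ : ℂ)⁻¹ with hc
  refine ⟨c • (x : H), M.smul_mem c hxM, ?_, ?_⟩
  · rw [norm_smul]
    simp [hc, hnorm]
  · intro j
    have hx : (x : H) ∈ F := x.2
    have key : (inner ℂ ((T j) (x : H)) (x : H) : ℂ) = l j * inner ℂ (x : H) (x : H) :=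
      hF j x hx x hx
    rw [map_smul, inner_smul_left, inner_smul_right, key]
    rw [inner_self_eq_norm_sq_to_K]
    simp only [hc, Complex.conj_ofReal, ← Complex.ofReal_pow]
    have hne : ((‖(x : H)‖ : ℂ)) ≠ 0 := by exact_mod_cast hnorm
    field_simp
    rw [map_div₀, map_one, Complex.conj_ofReal, div_mul_eq_mul_div, div_mul_eq_mul_div, div_eq_iff hne]
    simp [sq, mul_comm, mul_left_comm, mul_assoc]
end

section
/- Let H be an infinite-dimensional separable complex Hilbert space and 𝒯 = (T₁,...,Tₙ) a tuple of bounded operators. Define W_∞(𝒯) as the set of λ ∈ ℂⁿ for which there is an infinite-dimensional closed subspace L with P_L Tⱼ P_L = λⱼ P_L for all j. Then W_∞(𝒯) is a convex subset of ℂⁿ. -/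
open scoped InnerProductSpace ComplexConjugate

set_option linter.unusedSectionVars false

section Aux
variable {H : Type*} [NormedAddCommGroup H] [InnerProductSpace ℂ H] [CompleteSpace H]

lemma exists_unit_orth (L : Submodule ℂ H) (hL : ¬ FiniteDimensional ℂ L) (s : Finset H) :
    ∃ u, u ∈ L ∧ ‖u‖ = 1 ∧ ∀ v ∈ s, ⟪u, (v : H)⟫_ℂ = 0 := by
  classical
  let f : L →ₗ[ℂ] (s → ℂ) :=
    LinearMap.pi (fun v => ((innerSL ℂ (v : H)).toLinearMap).comp L.subtype)
  have hker : LinearMap.ker f ≠ ⊥ := by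
    intro h
    exact hL (FiniteDimensional.of_injective f (LinearMap.ker_eq_bot.mp h))
  obtain ⟨x, hxker, hx0⟩ := Submodule.exists_mem_ne_zero_of_ne_bot hker
  have hx0' : (x : H) ≠ 0 := fun h => hx0 (Subtype.ext h)
  refine ⟨(‖(x : H)‖⁻¹ : ℂ) • (x : H), L.smul_mem _ x.2, norm_smul_inv_norm hx0', ?_⟩
  intro v hv
  have hfx : f x = 0 := hxker
  have : ⟪(v : H), (x : H)⟫_ℂ = 0 := congrFun hfx ⟨v, hv⟩
  rw [inner_smul_left, ← inner_conj_symm, this]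
  simp

noncomputable def pickv (L : Submodule ℂ H) (hL : ¬ FiniteDimensional ℂ L) (s : Finset H) : H :=
  (exists_unit_orth L hL s).choose

lemma pickv_mem (L : Submodule ℂ H) (hL : ¬ FiniteDimensional ℂ L) (s : Finset H) :
    pickv L hL s ∈ L := (exists_unit_orth L hL s).choose_spec.1

lemma pickv_norm (L : Submodule ℂ H) (hL : ¬ FiniteDimensional ℂ L) (s : Finset H) :
    ‖pickv L hL s‖ = 1 := (exists_unit_orth L hL s).choose_spec.2.1

lemma pickv_orth (L : Submodule ℂ H) (hL : ¬ FiniteDimensional ℂ L) (s : Finset H)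
    {v : H} (hv : v ∈ s) : ⟪pickv L hL s, v⟫_ℂ = 0 :=
  (exists_unit_orth L hL s).choose_spec.2.2 v hv

noncomputable def prevSet {n m : ℕ} (T : Fin n → H →L[ℂ] H) (v : Fin m → H) : Finset H :=
  letI := Classical.decEq H
  Finset.image v Finset.univ ∪
    Finset.image (fun p : Fin n × Fin m => T p.1 (v p.2)) Finset.univ ∪
    Finset.image (fun p : Fin n × Fin m => ContinuousLinearMap.adjoint (T p.1) (v p.2))
      Finset.univ

lemma self_mem_prevSet {n m : ℕ} (T : Fin n → H →L[ℂ] H) (v : Fin m → H) (i : Fin m) :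
    v i ∈ prevSet T v := by
  classical
  simp only [prevSet, Finset.mem_union, Finset.mem_image]
  exact Or.inl (Or.inl ⟨i, Finset.mem_univ _, rfl⟩)

lemma map_mem_prevSet {n m : ℕ} (T : Fin n → H →L[ℂ] H) (v : Fin m → H) (j : Fin n) (i : Fin m) :
    T j (v i) ∈ prevSet T v := by
  classical
  simp only [prevSet, Finset.mem_union, Finset.mem_image]
  exact Or.inl (Or.inr ⟨(j, i), Finset.mem_univ _, rfl⟩)

lemma adj_mem_prevSet {n m : ℕ} (T : Fin n → H →L[ℂ] H) (v : Fin m → H) (j : Fin n) (i : Fin m) :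
    ContinuousLinearMap.adjoint (T j) (v i) ∈ prevSet T v := by
  classical
  simp only [prevSet, Finset.mem_union, Finset.mem_image]
  exact Or.inr ⟨(j, i), Finset.mem_univ _, rfl⟩

noncomputable def seqv (L : ℕ → Submodule ℂ H) (hL : ∀ m, ¬ FiniteDimensional ℂ (L m))
    {n : ℕ} (T : Fin n → H →L[ℂ] H) : ℕ → H
  | m => pickv (L m) (hL m) (prevSet T (fun i : Fin m => seqv L hL T i))
  termination_by m => m
  decreasing_by exact i.isLt

lemma seqv_mem (L : ℕ → Submodule ℂ H) (hL : ∀ m, ¬ FiniteDimensional ℂ (L m))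
    {n : ℕ} (T : Fin n → H →L[ℂ] H) (m : ℕ) : seqv L hL T m ∈ L m := by
  rw [seqv]; exact pickv_mem _ _ _

lemma seqv_norm (L : ℕ → Submodule ℂ H) (hL : ∀ m, ¬ FiniteDimensional ℂ (L m))
    {n : ℕ} (T : Fin n → H →L[ℂ] H) (m : ℕ) : ‖seqv L hL T m‖ = 1 := by
  rw [seqv]; exact pickv_norm _ _ _

lemma seqv_orth (L : ℕ → Submodule ℂ H) (hL : ∀ m, ¬ FiniteDimensional ℂ (L m))
    {n : ℕ} (T : Fin n → H →L[ℂ] H) {i m : ℕ} (him : i < m) :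
    ⟪seqv L hL T m, seqv L hL T i⟫_ℂ = 0 := by
  rw [seqv]
  exact pickv_orth _ _ _ (self_mem_prevSet T (fun k : Fin m => seqv L hL T k) ⟨i, him⟩)

lemma seqv_orth_map (L : ℕ → Submodule ℂ H) (hL : ∀ m, ¬ FiniteDimensional ℂ (L m))
    {n : ℕ} (T : Fin n → H →L[ℂ] H) {i m : ℕ} (him : i < m) (j : Fin n) :
    ⟪seqv L hL T m, T j (seqv L hL T i)⟫_ℂ = 0 := by
  rw [seqv]
  exact pickv_orth _ _ _ (map_mem_prevSet T (fun k : Fin m => seqv L hL T k) j ⟨i, him⟩)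

lemma seqv_orth_adj (L : ℕ → Submodule ℂ H) (hL : ∀ m, ¬ FiniteDimensional ℂ (L m))
    {n : ℕ} (T : Fin n → H →L[ℂ] H) {i m : ℕ} (him : i < m) (j : Fin n) :
    ⟪seqv L hL T m, ContinuousLinearMap.adjoint (T j) (seqv L hL T i)⟫_ℂ = 0 := by
  rw [seqv]
  exact pickv_orth _ _ _ (adj_mem_prevSet T (fun k : Fin m => seqv L hL T k) j ⟨i, him⟩)

lemma seqv_orth' (L : ℕ → Submodule ℂ H) (hL : ∀ m, ¬ FiniteDimensional ℂ (L m))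
    {n : ℕ} (T : Fin n → H →L[ℂ] H) {p q : ℕ} (h : p ≠ q) :
    ⟪seqv L hL T p, seqv L hL T q⟫_ℂ = 0 := by
  rcases lt_or_gt_of_ne h with h | h
  · rw [← inner_conj_symm, seqv_orth L hL T h, map_zero]
  · exact seqv_orth L hL T h

lemma seqv_T_orth (L : ℕ → Submodule ℂ H) (hL : ∀ m, ¬ FiniteDimensional ℂ (L m))
    {n : ℕ} (T : Fin n → H →L[ℂ] H) {p q : ℕ} (h : p ≠ q) (j : Fin n) :
    ⟪T j (seqv L hL T p), seqv L hL T q⟫_ℂ = 0 := by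
  rcases lt_or_gt_of_ne h with h | h
  · rw [← inner_conj_symm, seqv_orth_map L hL T h j, map_zero]
  · rw [← ContinuousLinearMap.adjoint_inner_right]
    exact seqv_orth_adj L hL T h j

end Aux

/-- The infinite numerical range
`W_∞(𝒯) = {λ : ∃ infinite-dimensional closed subspace L, P_L Tⱼ P_L = λⱼ P_L ∀ j}`
(the operator identity encoded as `⟨Tⱼ x, y⟩ = λⱼ ⟨x, y⟩` for all `x, y ∈ L`)
is a convex subset of `ℂⁿ`. -/
theorem stmt6 {H : Type*} [NormedAddCommGroup H] [InnerProductSpace ℂ H] [CompleteSpace H]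
    [TopologicalSpace.SeparableSpace H] (hinf : ¬ FiniteDimensional ℂ H)
    (n : ℕ) (T : Fin n → H →L[ℂ] H) :
    Convex ℝ {l : Fin n → ℂ | ∃ L : Submodule ℂ H, IsClosed (L : Set H) ∧
      ¬ FiniteDimensional ℂ ↥L ∧
      ∀ j, ∀ x ∈ L, ∀ y ∈ L, (inner ℂ ((T j) x) y : ℂ) = l j * inner ℂ x y} := by
  classical
  intro l1 hl1 l2 hl2 a b ha hb hab
  obtain ⟨L₁, _, hfin₁, hcomp₁⟩ := hl1
  obtain ⟨L₂, _, hfin₂, hcomp₂⟩ := hl2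
  set Lf : ℕ → Submodule ℂ H := fun m => if m % 2 = 0 then L₁ else L₂ with hLfdef
  have hLfin : ∀ m, ¬ FiniteDimensional ℂ (Lf m) := by
    intro m
    by_cases h : m % 2 = 0
    · have hh : Lf m = L₁ := if_pos h
      rw [hh]; exact hfin₁
    · have hh : Lf m = L₂ := if_neg h
      rw [hh]; exact hfin₂
  set u : ℕ → H := seqv Lf hLfin T with hudef
  set x : ℕ → H := fun k => u (2 * k) with hxdef
  set y : ℕ → H := fun k => u (2 * k + 1) with hydef
  have hx_mem : ∀ k, x k ∈ L₁ := by
    intro k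
    have hL : Lf (2 * k) = L₁ := if_pos (by omega)
    have h := seqv_mem Lf hLfin T (2 * k)
    rw [hL] at h
    exact h
  have hy_mem : ∀ k, y k ∈ L₂ := by
    intro k
    have hL : Lf (2 * k + 1) = L₂ := if_neg (by omega)
    have h := seqv_mem Lf hLfin T (2 * k + 1)
    rw [hL] at h
    exact h
  set α : ℂ := ((Real.sqrt a : ℝ) : ℂ) with hαdef
  set β : ℂ := ((Real.sqrt b : ℝ) : ℂ) with hβdef
  have hα2 : α * α = (a : ℂ) := by
    rw [hαdef]; norm_cast; exact Real.mul_self_sqrt ha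
  have hβ2 : β * β = (b : ℂ) := by
    rw [hβdef]; norm_cast; exact Real.mul_self_sqrt hb
  have hαc : (starRingEnd ℂ) α = α := Complex.conj_ofReal _
  have hβc : (starRingEnd ℂ) β = β := Complex.conj_ofReal _
  set z : ℕ → H := fun k => α • x k + β • y k with hzdef
  have hxx : ∀ k l, ⟪x k, x l⟫_ℂ = if k = l then 1 else 0 := by
    intro k l
    by_cases h : k = l
    · subst h
      rw [if_pos rfl, inner_self_eq_norm_sq_to_K, seqv_norm]
      norm_num
    · rw [if_neg h]
      exact seqv_orth' Lf hLfin T (by omega)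
  have hyy : ∀ k l, ⟪y k, y l⟫_ℂ = if k = l then 1 else 0 := by
    intro k l
    by_cases h : k = l
    · subst h
      rw [if_pos rfl, inner_self_eq_norm_sq_to_K, seqv_norm]
      norm_num
    · rw [if_neg h]
      exact seqv_orth' Lf hLfin T (by omega)
  have hxy : ∀ k l, ⟪x k, y l⟫_ℂ = 0 := fun k l => seqv_orth' Lf hLfin T (by omega)
  have hyx : ∀ k l, ⟪y k, x l⟫_ℂ = 0 := fun k l => seqv_orth' Lf hLfin T (by omega)
  have hab' : α * α + β * β = 1 := by
    rw [hα2, hβ2]; norm_cast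
  have hzz : ∀ k l, ⟪z k, z l⟫_ℂ = if k = l then 1 else 0 := by
    intro k l
    simp only [hzdef, inner_add_left, inner_add_right, inner_smul_left, inner_smul_right,
      hαc, hβc, hxx k l, hyy k l, hxy k l, hyx k l, mul_zero, add_zero, zero_add]
    split_ifs
    · linear_combination hab'
    · ring
  set ν : Fin n → ℂ := fun j => (a : ℂ) * l1 j + (b : ℂ) * l2 j with hνdef
  have hTxy : ∀ j k l, ⟪T j (x k), y l⟫_ℂ = 0 := fun j k l =>
    seqv_T_orth Lf hLfin T (by omega) j
  have hTyx : ∀ j k l, ⟪T j (y k), x l⟫_ℂ = 0 := fun j k l =>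
    seqv_T_orth Lf hLfin T (by omega) j
  have hTzz : ∀ j k l, ⟪T j (z k), z l⟫_ℂ = ν j * ⟪z k, z l⟫_ℂ := by
    intro j k l
    have e1 : ⟪T j (x k), x l⟫_ℂ = l1 j * ⟪x k, x l⟫_ℂ :=
      hcomp₁ j (x k) (hx_mem k) (x l) (hx_mem l)
    have e2 : ⟪T j (y k), y l⟫_ℂ = l2 j * ⟪y k, y l⟫_ℂ :=
      hcomp₂ j (y k) (hy_mem k) (y l) (hy_mem l)
    rw [hzz k l]
    simp only [hzdef, map_add, map_smul, inner_add_left, inner_add_right, inner_smul_left,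
      inner_smul_right, hαc, hβc, e1, e2, hTxy j k l, hTyx j k l, hxx k l, hyy k l,
      mul_zero, add_zero, zero_add, hνdef]
    split_ifs
    · linear_combination l1 j * hα2 + l2 j * hβ2
    · ring
  set M : Submodule ℂ H := Submodule.span ℂ (Set.range z) with hMdef
  set Lc : Submodule ℂ H := M.topologicalClosure with hLcdef
  have hzM : ∀ k, z k ∈ M := fun k => Submodule.subset_span ⟨k, rfl⟩
  have hzLc : ∀ k, z k ∈ Lc := fun k => Submodule.le_topologicalClosure M (hzM k)
  refine ⟨Lc, Submodule.isClosed_topologicalClosure M, ?_, ?_⟩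
  · -- infinite dimensional
    intro hfd
    have hon : Orthonormal ℂ z := orthonormal_iff_ite.mpr hzz
    have hli : LinearIndependent ℂ z := hon.linearIndependent
    have hli' : LinearIndependent ℂ (fun k : ℕ => (⟨z k, hzLc k⟩ : Lc)) := by
      apply LinearIndependent.of_comp Lc.subtype
      convert hli
      rfl
    exact Module.Finite.not_linearIndependent_of_infinite _ hli'
  · -- compression identity
    intro j x' hx' y' hy'
    have hν' : (a • l1 + b • l2) j = ν j := by
      simp [hνdef, Complex.real_smul]
    rw [hν']
    have key : ∀ u' ∈ M, ∀ v' ∈ M, ⟪T j u', v'⟫_ℂ = ν j * ⟪u', v'⟫_ℂ := by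
      intro u' hu' v' hv'
      refine Submodule.span_induction₂
        (p := fun u' v' _ _ => ⟪T j u', v'⟫_ℂ = ν j * ⟪u', v'⟫_ℂ) ?_ ?_ ?_ ?_ ?_ ?_ ?_ hu' hv'
      · rintro _ _ ⟨k, rfl⟩ ⟨l, rfl⟩
        exact hTzz j k l
      · intro w hw; simp
      · intro w hw; simp
      · intro p q r hp hq hr h1 h2
        rw [map_add, inner_add_left, inner_add_left, h1, h2, mul_add]
      · intro p q r hp hq hr h1 h2
        rw [inner_add_right, inner_add_right, h1, h2, mul_add]
      · intro c p q hp hq h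
        rw [map_smul, inner_smul_left, inner_smul_left, h]; ring
      · intro c p q hp hq h
        rw [inner_smul_right, inner_smul_right, h]; ring
    have step1 : ∀ v' ∈ M, ∀ u' ∈ Lc, ⟪T j u', v'⟫_ℂ = ν j * ⟪u', v'⟫_ℂ := by
      intro v' hv' u' hu'
      have hc : (Lc : Set H) ⊆ {w | ⟪T j w, v'⟫_ℂ = ν j * ⟪w, v'⟫_ℂ} := by
        rw [hLcdef, Submodule.topologicalClosure_coe]
        apply closure_minimal
        · intro w hw; exact key w hw v' hv'
        · exact isClosed_eq ((T j).continuous.inner continuous_const)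
            (continuous_const.mul (continuous_id.inner continuous_const))
      exact hc hu'
    have step2 : ∀ v' ∈ Lc, ⟪T j x', v'⟫_ℂ = ν j * ⟪x', v'⟫_ℂ := by
      intro v' hv'
      have hc : (Lc : Set H) ⊆ {w | ⟪T j x', w⟫_ℂ = ν j * ⟪x', w⟫_ℂ} := by
        rw [hLcdef, Submodule.topologicalClosure_coe]
        apply closure_minimal
        · intro w hw; exact step1 w hw x' hx'
        · exact isClosed_eq (continuous_const.inner continuous_id)
            (continuous_const.mul (continuous_const.inner continuous_id))
      exact hc hv'
    exact step2 y' hy'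
end

section
/- Let H be an infinite-dimensional separable complex Hilbert space and 𝒯 = (T₁,...,Tₙ) a tuple of bounded operators. The joint essential numerical range W_e(𝒯), defined as the set of λ ∈ ℂⁿ for which some orthonormal sequence (x_k) satisfies ⟨Tⱼ x_k, x_k⟩ → λⱼ for each j, is a convex subset of ℂⁿ. -/
open Filter

section Aux
set_option linter.unusedSectionVars false

local notation "⟪" x ", " y "⟫" => @inner ℂ _ _ x y

variable {H : Type*} [NormedAddCommGroup H] [InnerProductSpace ℂ H] [CompleteSpace H]

/-- Approximate characterization. -/
def SProp (n : ℕ) (T : Fin n → H →L[ℂ] H) (l : Fin n → ℂ) : Prop :=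
  ∀ ε : ℝ, 0 < ε → ∀ F : Submodule ℂ H, FiniteDimensional ℂ F →
    ∃ v : H, ‖v‖ = 1 ∧ (∀ u ∈ F, ⟪u, v⟫ = 0) ∧ ∀ j, ‖⟪T j v, v⟫ - l j‖ < ε

theorem mem_to_S {n : ℕ} {T : Fin n → H →L[ℂ] H} {l : Fin n → ℂ} {x : ℕ → H}
    (hx : Orthonormal ℂ x)
    (ht : ∀ j, Tendsto (fun k => ⟪T j (x k), x k⟫) atTop (nhds (l j))) :
    SProp n T l := by
  intro ε hε F hF
  haveI := hF
  -- weak convergence to 0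
  have weak : ∀ e : H, Tendsto (fun k => ⟪e, x k⟫) atTop (nhds 0) := by
    intro e
    have hsum : Summable fun k => ‖⟪x k, e⟫‖ ^ 2 := Orthonormal.inner_products_summable e hx
    have h0 := hsum.tendsto_atTop_zero
    rw [tendsto_zero_iff_norm_tendsto_zero]
    have heq : (fun k => ‖⟪e, x k⟫‖) = fun k => Real.sqrt (‖⟪x k, e⟫‖ ^ 2) := by
      funext k
      rw [Real.sqrt_sq (norm_nonneg _), ← inner_conj_symm, RCLike.norm_conj]
    rw [heq]
    simpa using h0.sqrt
  set b := stdOrthonormalBasis ℂ F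
  -- projections tend to 0
  have hP : Tendsto (fun k => ((F.orthogonalProjectionOnto (x k) : F) : H)) atTop (nhds 0) := by
    have heq : ∀ k, ((F.orthogonalProjectionOnto (x k) : F) : H)
        = ∑ i, ⟪(b i : H), x k⟫ • (b i : H) := by
      intro k
      rw [b.orthogonalProjectionOnto_apply_eq_sum]
      push_cast
      rfl
    simp only [heq]
    have : Tendsto (fun k => ∑ i, ⟪(b i : H), x k⟫ • (b i : H)) atTop
        (nhds (∑ i : Fin (Module.finrank ℂ F), (0 : H))) := by
      refine tendsto_finset_sum _ fun i _ => ?_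
      simpa using (weak (b i)).smul_const (b i : H)
    simpa using this
  set w : ℕ → H := fun k => x k - (F.orthogonalProjectionOnto (x k) : H) with hw
  have hworth : ∀ k, w k ∈ Fᗮ := fun k => Submodule.sub_starProjection_mem_orthogonal (x k)
  have hxnorm : ∀ k, ‖x k‖ = 1 := fun k => hx.1 k
  have hwn : Tendsto (fun k => ‖w k‖) atTop (nhds 1) := by
    have h1 : Tendsto (fun k => ‖w k‖ - 1) atTop (nhds 0) := by
      refine squeeze_zero_norm (fun k => ?_) (by simpa using hP.norm)
      have h2 : ‖w k‖ - 1 = ‖w k‖ - ‖x k‖ := by rw [hxnorm k]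
      rw [Real.norm_eq_abs, h2]
      calc |‖w k‖ - ‖x k‖| ≤ ‖w k - x k‖ := abs_norm_sub_norm_le _ _
        _ = ‖((F.orthogonalProjectionOnto (x k) : F) : H)‖ := by
            simp [hw, sub_sub_cancel_left, norm_neg]
    have := h1.add_const 1
    simpa using this
  set v : ℕ → H := fun k => ‖w k‖⁻¹ • w k with hv
  -- v k - x k → 0
  have hvx : Tendsto (fun k => v k - x k) atTop (nhds 0) := by
    have heq : ∀ k, v k - x k = (‖w k‖⁻¹ - 1) • w k - ((F.orthogonalProjectionOnto (x k) : F) : H) := by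
      intro k
      simp only [hv, hw, sub_smul, one_smul]
      abel
    have hc : Tendsto (fun k => ‖w k‖⁻¹ - 1) atTop (nhds 0) := by
      have := (hwn.inv₀ one_ne_zero).sub_const 1
      simpa using this
    have h1 : Tendsto (fun k => (‖w k‖⁻¹ - 1) • w k) atTop (nhds 0) := by
      apply squeeze_zero_norm (a := fun k => |‖w k‖⁻¹ - 1| * ‖w k‖)
      · intro k
        rw [norm_smul, Real.norm_eq_abs]
      · simpa using (hc.abs.mul hwn)
    simp only [heq]
    simpa using h1.sub hP
  have hvxn : Tendsto (fun k => ‖v k - x k‖) atTop (nhds 0) := by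
    simpa using hvx.norm
  -- eventually unit norm
  have hwev : ∀ᶠ k in atTop, (0:ℝ) < ‖w k‖ :=
    hwn.eventually (eventually_gt_nhds one_pos)
  have hvnorm : ∀ᶠ k in atTop, ‖v k‖ = 1 := by
    filter_upwards [hwev] with k hk
    rw [hv]
    simp [norm_smul, abs_of_pos (inv_pos.mpr hk), inv_mul_cancel₀ hk.ne']
  -- inner products converge
  have hv_inner : ∀ j, Tendsto (fun k => ⟪T j (v k), v k⟫) atTop (nhds (l j)) := by
    intro j
    have hdiff : Tendsto (fun k => ⟪T j (v k), v k⟫ - ⟪T j (x k), x k⟫) atTop (nhds 0) := by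
      apply squeeze_zero_norm
        (a := fun k => ‖T j‖ * ‖v k - x k‖ * (‖v k - x k‖ + 1) + ‖T j‖ * ‖v k - x k‖)
      · intro k
        have heq : ⟪T j (v k), v k⟫ - ⟪T j (x k), x k⟫
            = ⟪T j (v k - x k), v k⟫ + ⟪T j (x k), v k - x k⟫ := by
          rw [map_sub, inner_sub_left, inner_sub_right]
          ring
        rw [heq]
        have hb1 : ‖⟪T j (v k - x k), v k⟫‖ ≤ ‖T j‖ * ‖v k - x k‖ * (‖v k - x k‖ + 1) := by
          calc ‖⟪T j (v k - x k), v k⟫‖ ≤ ‖T j (v k - x k)‖ * ‖v k‖ := norm_inner_le_norm _ _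
            _ ≤ (‖T j‖ * ‖v k - x k‖) * (‖v k - x k‖ + 1) := by
                apply mul_le_mul ((T j).le_opNorm _) ?_ (norm_nonneg _)
                  (by positivity)
                calc ‖v k‖ = ‖(v k - x k) + x k‖ := by rw [sub_add_cancel]
                  _ ≤ ‖v k - x k‖ + ‖x k‖ := norm_add_le _ _
                  _ = ‖v k - x k‖ + 1 := by rw [hxnorm k]
        have hb2 : ‖⟪T j (x k), v k - x k⟫‖ ≤ ‖T j‖ * ‖v k - x k‖ := by
          calc ‖⟪T j (x k), v k - x k⟫‖ ≤ ‖T j (x k)‖ * ‖v k - x k‖ := norm_inner_le_norm _ _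
            _ ≤ (‖T j‖ * ‖x k‖) * ‖v k - x k‖ :=
                mul_le_mul_of_nonneg_right ((T j).le_opNorm _) (norm_nonneg _)
            _ = ‖T j‖ * ‖v k - x k‖ := by rw [hxnorm k]; ring
        calc ‖_ + _‖ ≤ _ + _ := norm_add_le _ _
          _ ≤ _ := add_le_add hb1 hb2
      · have : Tendsto (fun k => ‖T j‖ * ‖v k - x k‖ * (‖v k - x k‖ + 1) + ‖T j‖ * ‖v k - x k‖)
            atTop (nhds (‖T j‖ * 0 * (0 + 1) + ‖T j‖ * 0)) := by
          exact (((tendsto_const_nhds.mul hvxn).mul (hvxn.add tendsto_const_nhds)).add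
            (tendsto_const_nhds.mul hvxn))
        simpa using this
    have := (ht j).add hdiff
    simp only [add_zero] at this
    apply this.congr
    intro k
    ring
  -- pick a good k
  have hev : ∀ᶠ k in atTop, (‖v k‖ = 1) ∧ ∀ j, ‖⟪T j (v k), v k⟫ - l j‖ < ε := by
    have h2 : ∀ᶠ k in atTop, ∀ j, ‖⟪T j (v k), v k⟫ - l j‖ < ε := by
      rw [eventually_all]
      intro j
      have := (hv_inner j).eventually (Metric.ball_mem_nhds (l j) hε)
      filter_upwards [this] with k hk
      rw [← dist_eq_norm]
      exact hk
    filter_upwards [hvnorm, h2] with k h1 h2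
    exact ⟨h1, h2⟩
  obtain ⟨k, hk1, hk2⟩ := hev.exists
  refine ⟨v k, hk1, ?_, hk2⟩
  intro u hu
  have hvF : v k ∈ Fᗮ := Submodule.smul_mem _ _ (hworth k)
  exact (Submodule.mem_orthogonal F (v k)).mp hvF u hu

theorem S_to_mem {n : ℕ} {T : Fin n → H →L[ℂ] H} {l : Fin n → ℂ} (hS : SProp n T l) :
    ∃ x : ℕ → H, Orthonormal ℂ x ∧
      ∀ j, Tendsto (fun k => ⟪T j (x k), x k⟫) atTop (nhds (l j)) := by
  have hpos : ∀ k : ℕ, (0:ℝ) < 1 / (k + 1) := fun k => by positivity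
  let pick : (k : ℕ) → (Fin k → H) → H := fun k prev =>
    Classical.choose (hS (1 / (k + 1)) (hpos k) (Submodule.span ℂ (Set.range prev))
      (FiniteDimensional.span_of_finite ℂ (Set.finite_range prev)))
  have pick_spec : ∀ (k : ℕ) (prev : Fin k → H),
      ‖pick k prev‖ = 1 ∧
      (∀ u ∈ Submodule.span ℂ (Set.range prev), ⟪u, pick k prev⟫ = 0) ∧
      ∀ j, ‖⟪T j (pick k prev), pick k prev⟫ - l j‖ < 1 / (k + 1) := fun k prev =>
    Classical.choose_spec (hS (1 / (k + 1)) (hpos k) (Submodule.span ℂ (Set.range prev))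
      (FiniteDimensional.span_of_finite ℂ (Set.finite_range prev)))
  let g : (k : ℕ) → Fin k → H := fun k =>
    Nat.rec (fun i => i.elim0) (fun k prev => Fin.snoc prev (pick k prev)) k
  have hg : ∀ k, g (k + 1) = Fin.snoc (g k) (pick k (g k)) := fun k => rfl
  set x : ℕ → H := fun k => g (k + 1) (Fin.last k) with hxdef
  have hx : ∀ k, x k = pick k (g k) := by
    intro k
    rw [hxdef]
    simp only [hg k, Fin.snoc_last]
  have compat : ∀ (k m : ℕ) (h : m < k), g k ⟨m, h⟩ = x m := by
    intro k
    induction k with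
    | zero => intro m h; exact absurd h (Nat.not_lt_zero m)
    | succ k ih =>
      intro m h
      rcases Nat.lt_succ_iff_lt_or_eq.mp h with h' | h'
      · have : (⟨m, h⟩ : Fin (k+1)) = Fin.castSucc ⟨m, h'⟩ := rfl
        rw [hg k, this, Fin.snoc_castSucc]
        exact ih m h'
      · subst h'
        have : (⟨m, h⟩ : Fin (m+1)) = Fin.last m := rfl
        rw [this]
  -- orthogonality of earlier to later
  have horth : ∀ m k : ℕ, m < k → ⟪x m, x k⟫ = 0 := by
    intro m k hmk
    have hmem : x m ∈ Submodule.span ℂ (Set.range (g k)) := by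
      apply Submodule.subset_span
      exact ⟨⟨m, hmk⟩, compat k m hmk⟩
    have := (pick_spec k (g k)).2.1 (x m) hmem
    rw [hx k]
    exact this
  have hnorm : ∀ k, ‖x k‖ = 1 := fun k => by rw [hx k]; exact (pick_spec k (g k)).1
  refine ⟨x, ?_, ?_⟩
  · rw [orthonormal_iff_ite]
    intro i j
    rcases lt_trichotomy i j with h | h | h
    · rw [if_neg h.ne, horth i j h]
    · subst h
      rw [if_pos rfl, inner_self_eq_norm_sq_to_K, hnorm i]
      norm_num
    · rw [if_neg h.ne', ← inner_conj_symm, horth j i h]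
      simp
  · intro j
    have hb : ∀ k, ‖⟪T j (x k), x k⟫ - l j‖ < 1 / ((k:ℝ) + 1) := by
      intro k
      have := (pick_spec k (g k)).2.2 j
      rw [hx k]
      exact_mod_cast this
    have h0 : Tendsto (fun k => ⟪T j (x k), x k⟫ - l j) atTop (nhds 0) := by
      apply squeeze_zero_norm (fun k => (hb k).le)
      exact tendsto_one_div_add_atTop_nhds_zero_nat
    have := h0.add_const (l j)
    simpa using this

theorem S_combo {n : ℕ} {T : Fin n → H →L[ℂ] H} {l m : Fin n → ℂ}
    (hl : SProp n T l) (hm : SProp n T m) {a b : ℝ} (ha : 0 ≤ a) (hb : 0 ≤ b)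
    (hab : a + b = 1) : SProp n T (a • l + b • m) := by
  intro ε hε F hF
  haveI := hF
  obtain ⟨x, hx1, hx2, hx3⟩ := hl (ε / 2) (by positivity) F hF
  set F' : Submodule ℂ H := F ⊔ Submodule.span ℂ
      ({x} ∪ Set.range (fun j => T j x) ∪ Set.range fun j => ContinuousLinearMap.adjoint (T j) x)
    with hF'def
  haveI : FiniteDimensional ℂ ↥(Submodule.span ℂ
      ({x} ∪ Set.range (fun j => T j x) ∪
        Set.range fun j => ContinuousLinearMap.adjoint (T j) x)) :=
    FiniteDimensional.span_of_finite ℂ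
      (((Set.finite_singleton x).union (Set.finite_range _)).union (Set.finite_range _))
  haveI : FiniteDimensional ℂ F' := Submodule.finiteDimensional_sup _ _
  obtain ⟨y, hy1, hy2, hy3⟩ := hm (ε / 2) (by positivity) F' inferInstance
  have hmemF' : ∀ u ∈ ({x} ∪ Set.range (fun j => T j x) ∪
      Set.range fun j => ContinuousLinearMap.adjoint (T j) x : Set H), u ∈ F' :=
    fun u hu => Submodule.mem_sup_right (Submodule.subset_span hu)
  have hxy : ⟪x, y⟫ = 0 := hy2 x (hmemF' x (Or.inl (Or.inl rfl)))
  have hTxy : ∀ j, ⟪T j x, y⟫ = 0 := fun j =>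
    hy2 _ (hmemF' _ (Or.inl (Or.inr ⟨j, rfl⟩)))
  have hTyx : ∀ j, ⟪T j y, x⟫ = 0 := by
    intro j
    have h1 : ⟪ContinuousLinearMap.adjoint (T j) x, y⟫ = 0 :=
      hy2 _ (hmemF' _ (Or.inr ⟨j, rfl⟩))
    rw [ContinuousLinearMap.adjoint_inner_left] at h1
    rw [← inner_conj_symm, h1, map_zero]
  set c : ℂ := (Real.sqrt a : ℂ) with hc
  set d : ℂ := (Real.sqrt b : ℂ) with hd
  have hcc : (starRingEnd ℂ) c * c = (a : ℂ) := by
    rw [hc, Complex.conj_ofReal, ← Complex.ofReal_mul, Real.mul_self_sqrt ha]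
  have hdd : (starRingEnd ℂ) d * d = (b : ℂ) := by
    rw [hd, Complex.conj_ofReal, ← Complex.ofReal_mul, Real.mul_self_sqrt hb]
  set z : H := c • x + d • y with hz
  have hyx : ⟪y, x⟫ = 0 := by rw [← inner_conj_symm, hxy, map_zero]
  -- norm of z
  have hzz : ⟪z, z⟫ = 1 := by
    rw [hz]
    simp only [inner_add_left, inner_add_right, inner_smul_left, inner_smul_right,
      hxy, hyx, mul_zero, add_zero, zero_add]
    rw [inner_self_eq_norm_sq_to_K, inner_self_eq_norm_sq_to_K, hx1, hy1]
    simp only [RCLike.ofReal_one, one_pow, mul_one]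
    rw [mul_comm c, mul_comm d, hcc, hdd, ← Complex.ofReal_add, hab, Complex.ofReal_one]
  have hznorm : ‖z‖ = 1 := by
    have h2 : ‖z‖ ^ 2 = 1 := by
      rw [norm_sq_eq_re_inner (𝕜 := ℂ), hzz]
      simp
    nlinarith [norm_nonneg z]
  refine ⟨z, hznorm, ?_, ?_⟩
  · intro u hu
    have h1 := hx2 u hu
    have h2 := hy2 u (Submodule.mem_sup_left hu)
    rw [hz, inner_add_right, inner_smul_right, inner_smul_right, h1, h2]
    ring
  · intro j
    have hexp : ⟪T j z, z⟫ = (a : ℂ) * ⟪T j x, x⟫ + (b : ℂ) * ⟪T j y, y⟫ := by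
      rw [hz, map_add, map_smul, map_smul]
      simp only [inner_add_left, inner_add_right, inner_smul_left, inner_smul_right,
        hTxy j, hTyx j, mul_zero, add_zero, zero_add]
      rw [← mul_assoc, ← mul_assoc, mul_comm c ((starRingEnd ℂ) c),
        mul_comm d ((starRingEnd ℂ) d), hcc, hdd]
    have hval : (a • l + b • m) j = (a : ℂ) * l j + (b : ℂ) * m j := by
      simp [Complex.real_smul]
    rw [hexp, hval]
    have hcalc : (a : ℂ) * ⟪T j x, x⟫ + (b : ℂ) * ⟪T j y, y⟫ - ((a : ℂ) * l j + (b : ℂ) * m j)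
        = (a : ℂ) * (⟪T j x, x⟫ - l j) + (b : ℂ) * (⟪T j y, y⟫ - m j) := by ring
    rw [hcalc]
    calc ‖(a : ℂ) * (⟪T j x, x⟫ - l j) + (b : ℂ) * (⟪T j y, y⟫ - m j)‖
        ≤ ‖(a : ℂ) * (⟪T j x, x⟫ - l j)‖ + ‖(b : ℂ) * (⟪T j y, y⟫ - m j)‖ := norm_add_le _ _
      _ = a * ‖⟪T j x, x⟫ - l j‖ + b * ‖⟪T j y, y⟫ - m j‖ := by
          rw [norm_mul, norm_mul, Complex.norm_real, Complex.norm_real,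
            Real.norm_of_nonneg ha, Real.norm_of_nonneg hb]
      _ ≤ a * (ε / 2) + b * (ε / 2) := by
          gcongr
          exacts [(hx3 j).le, (hy3 j).le]
      _ = ε / 2 := by rw [← add_mul, hab]; ring
      _ < ε := by linarith

end Aux

/-- The joint essential numerical range
`W_e(𝒯) = {λ : ∃ orthonormal sequence (x_k), ⟨Tⱼ x_k, x_k⟩ → λⱼ for all j}`
is a convex subset of `ℂⁿ`. -/
theorem stmt7 {H : Type*} [NormedAddCommGroup H] [InnerProductSpace ℂ H] [CompleteSpace H]
    [TopologicalSpace.SeparableSpace H] (hinf : ¬ FiniteDimensional ℂ H)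
    (n : ℕ) (T : Fin n → H →L[ℂ] H) :
    Convex ℝ {l : Fin n → ℂ | ∃ x : ℕ → H, Orthonormal ℂ x ∧
      ∀ j, Tendsto (fun k => (inner ℂ ((T j) (x k)) (x k) : ℂ)) atTop (nhds (l j))} := by
  intro l hl m hm a b ha hb hab
  obtain ⟨x, hx, hxt⟩ := hl
  obtain ⟨y, hy, hyt⟩ := hm
  exact S_to_mem (S_combo (mem_to_S hx hxt) (mem_to_S hy hyt) ha hb hab)
end

section
/- Let H be an infinite-dimensional complex Hilbert space, 𝒯 = (T₁,...,Tₙ) a tuple of bounded operators, and λ ∈ W_e(𝒯). Then for every δ > 0 and every closed subspace M ⊆ H of finite codimension there exists a unit vector x ∈ M with |⟨Tⱼx, x⟩ − λⱼ| < δ for all j = 1,...,n. -/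
open Filter

/-- If `λ ∈ W_e(𝒯)` then for every `δ > 0` and every closed subspace `M`
of finite codimension there is a unit vector `x ∈ M` with `|⟨Tⱼ x, x⟩ − λⱼ| < δ` for all `j`. -/
theorem stmt8 {H : Type*} [NormedAddCommGroup H] [InnerProductSpace ℂ H] [CompleteSpace H]
    (hinf : ¬ FiniteDimensional ℂ H)
    (n : ℕ) (T : Fin n → H →L[ℂ] H) (l : Fin n → ℂ)
    (h : ∃ x : ℕ → H, Orthonormal ℂ x ∧
      ∀ j, Tendsto (fun k => (inner ℂ ((T j) (x k)) (x k) : ℂ)) atTop (nhds (l j))) :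
    ∀ δ : ℝ, 0 < δ → ∀ M : Submodule ℂ H, IsClosed (M : Set H) →
      FiniteDimensional ℂ ↥Mᗮ →
      ∃ x ∈ M, ‖x‖ = 1 ∧ ∀ j, ‖(inner ℂ ((T j) x) x : ℂ) - l j‖ < δ := by
  intro δ hδ M hMclosed hfin
  obtain ⟨x, hx, hconv⟩ := h
  haveI : CompleteSpace M := hMclosed.completeSpace_coe
  -- weak convergence of the orthonormal sequence to 0
  have hweak : ∀ w : H, Tendsto (fun k => (inner ℂ w (x k) : ℂ)) atTop (nhds 0) := by
    intro w
    have hsum : Summable fun i => ‖(inner ℂ (x i) w : ℂ)‖ ^ 2 :=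
      hx.inner_products_summable w
    have h2 : Tendsto (fun k => ‖(inner ℂ (x k) w : ℂ)‖ ^ 2) atTop (nhds 0) :=
      hsum.tendsto_atTop_zero
    have h3 : Tendsto (fun k => ‖(inner ℂ (x k) w : ℂ)‖) atTop (nhds 0) := by
      have := (Real.continuous_sqrt.tendsto 0).comp h2
      simpa [Function.comp_def, Real.sqrt_sq, norm_nonneg] using this
    have h4 : Tendsto (fun k => (inner ℂ (x k) w : ℂ)) atTop (nhds 0) :=
      tendsto_zero_iff_norm_tendsto_zero.2 h3
    have h5 := ((continuous_star.tendsto (0:ℂ)).comp h4)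
    simpa [Function.comp_def, inner_conj_symm] using h5
  -- the projection onto Mᗮ of x k tends to 0
  set Q : H → H := fun v => (Submodule.orthogonalProjectionOnto Mᗮ v : H) with hQ
  have hQ0 : Tendsto (fun k => Q (x k)) atTop (nhds 0) := by
    set b := stdOrthonormalBasis ℂ ↥Mᗮ
    have hrepr : ∀ k, Q (x k) =
        ∑ i, (inner ℂ ((b i : H)) (x k) : ℂ) • (b i : H) := by
      intro k
      have h1 := congrArg (Submodule.subtype Mᗮ) (b.orthogonalProjectionOnto_apply_eq_sum (x k))
      simpa [hQ, map_sum] using h1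
    rw [funext hrepr]
    have : Tendsto (fun k => ∑ i, (inner ℂ ((b i : H)) (x k) : ℂ) • (b i : H)) atTop
        (nhds (∑ i, (0 : ℂ) • (b i : H))) := by
      refine tendsto_finset_sum _ fun i _ => ?_
      exact (hweak (b i : H)).smul tendsto_const_nhds
    simpa using this
  have hQn : Tendsto (fun k => ‖Q (x k)‖) atTop (nhds 0) := by
    simpa using hQ0.norm
  -- define y and z
  set y : ℕ → H := fun k => x k - Q (x k) with hy
  have hxnorm : ∀ k, ‖x k‖ = 1 := fun k => hx.1 k
  have hyM : ∀ k, y k ∈ M := by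
    intro k
    have h1 : x k - (Submodule.orthogonalProjectionOnto Mᗮ (x k) : H) ∈ Mᗮᗮ :=
      Submodule.sub_starProjection_mem_orthogonal (K := Mᗮ) (x k)
    rwa [Submodule.orthogonal_orthogonal] at h1
  have hyx : ∀ k, ‖y k - x k‖ = ‖Q (x k)‖ := by
    intro k; simp [hy, norm_sub_rev]
  have hyn : Tendsto (fun k => ‖y k‖) atTop (nhds 1) := by
    rw [tendsto_iff_norm_sub_tendsto_zero]
    refine squeeze_zero (fun k => norm_nonneg _) (fun k => ?_) hQn
    rw [show (1:ℝ) = ‖x k‖ from (hxnorm k).symm]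
    calc ‖‖y k‖ - ‖x k‖‖ = |‖y k‖ - ‖x k‖| := Real.norm_eq_abs _
      _ ≤ ‖y k - x k‖ := abs_norm_sub_norm_le _ _
      _ = ‖Q (x k)‖ := hyx k
  set z : ℕ → H := fun k => (‖y k‖)⁻¹ • y k with hz
  have hzx : Tendsto (fun k => ‖z k - x k‖) atTop (nhds 0) := by
    have hbound : ∀ k, ‖z k - x k‖ ≤ |(‖y k‖)⁻¹ - 1| * ‖y k‖ + ‖Q (x k)‖ := by
      intro k
      have hid : z k - x k = ((‖y k‖)⁻¹ - 1) • y k + (y k - x k) := by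
        simp [hz, sub_smul, one_smul]
      rw [hid]
      calc ‖((‖y k‖)⁻¹ - 1) • y k + (y k - x k)‖
          ≤ ‖((‖y k‖)⁻¹ - 1) • y k‖ + ‖y k - x k‖ := norm_add_le _ _
        _ = |(‖y k‖)⁻¹ - 1| * ‖y k‖ + ‖Q (x k)‖ := by
            rw [norm_smul, Real.norm_eq_abs, hyx k]
    have hinv : Tendsto (fun k => (‖y k‖)⁻¹) atTop (nhds 1) := by
      simpa using hyn.inv₀ one_ne_zero
    have hg : Tendsto (fun k => |(‖y k‖)⁻¹ - 1| * ‖y k‖ + ‖Q (x k)‖) atTop (nhds 0) := by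
      have := (((hinv.sub (tendsto_const_nhds (x := (1:ℝ)))).abs.mul hyn).add hQn)
      simpa using this
    exact squeeze_zero (fun k => norm_nonneg _) hbound hg
  have hzle : ∀ k, ‖z k‖ ≤ 1 := by
    intro k
    rw [hz]
    simp only [norm_smul, Real.norm_eq_abs, abs_inv, abs_norm]
    rcases eq_or_ne (‖y k‖) 0 with h0 | h0
    · simp [h0]
    · rw [inv_mul_cancel₀ h0]
  -- the quadratic forms along z converge to l j
  have htz : ∀ j, Tendsto (fun k => (inner ℂ ((T j) (z k)) (z k) : ℂ)) atTop (nhds (l j)) := by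
    intro j
    have hd : Tendsto (fun k =>
        (inner ℂ ((T j) (z k)) (z k) : ℂ) - (inner ℂ ((T j) (x k)) (x k) : ℂ)) atTop (nhds 0) := by
      refine squeeze_zero_norm (fun k => ?_)
        (show Tendsto (fun k => 2 * ‖T j‖ * ‖z k - x k‖) atTop (nhds 0) by
          simpa using (tendsto_const_nhds (x := 2 * ‖T j‖)).mul hzx)
      have hid : (inner ℂ ((T j) (z k)) (z k) : ℂ) - (inner ℂ ((T j) (x k)) (x k) : ℂ)
          = (inner ℂ ((T j) (z k) - (T j) (x k)) (z k) : ℂ)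
            + (inner ℂ ((T j) (x k)) (z k - x k) : ℂ) := by
        rw [inner_sub_left, inner_sub_right]; ring
      rw [hid]
      calc ‖(inner ℂ ((T j) (z k) - (T j) (x k)) (z k) : ℂ)
            + (inner ℂ ((T j) (x k)) (z k - x k) : ℂ)‖
          ≤ ‖(inner ℂ ((T j) (z k) - (T j) (x k)) (z k) : ℂ)‖
            + ‖(inner ℂ ((T j) (x k)) (z k - x k) : ℂ)‖ := norm_add_le _ _
        _ ≤ ‖(T j) (z k) - (T j) (x k)‖ * ‖z k‖ + ‖(T j) (x k)‖ * ‖z k - x k‖ := by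
            gcongr <;> exact norm_inner_le_norm _ _
        _ ≤ ‖T j‖ * ‖z k - x k‖ * 1 + ‖T j‖ * ‖x k‖ * ‖z k - x k‖ := by
            gcongr
            · rw [← map_sub]; exact (T j).le_opNorm _
            · exact hzle k
            · exact (T j).le_opNorm _
        _ = 2 * ‖T j‖ * ‖z k - x k‖ := by rw [hxnorm k]; ring
    have := (hconv j).add hd
    simpa using this
  -- pick a large index
  have hev1 : ∀ᶠ k in atTop, ∀ j, ‖(inner ℂ ((T j) (z k)) (z k) : ℂ) - l j‖ < δ := by
    rw [eventually_all]
    intro j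
    have := (htz j).eventually (Metric.ball_mem_nhds (l j) hδ)
    simpa [Metric.mem_ball, dist_eq_norm] using this
  have hev2 : ∀ᶠ k in atTop, (1 : ℝ) / 2 < ‖y k‖ :=
    hyn.eventually (eventually_gt_nhds (by norm_num))
  obtain ⟨K, hK1, hK2⟩ := (hev1.and hev2).exists
  have hyK0 : ‖y K‖ ≠ 0 := by positivity
  refine ⟨z K, ?_, ?_, hK1⟩
  · exact M.smul_mem _ (hyM K)
  · rw [hz]
    simp only [norm_smul, Real.norm_eq_abs, abs_inv, abs_norm]
    exact inv_mul_cancel₀ hyK0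
end

section
/- Let H be an infinite-dimensional complex Hilbert space and 𝒯 = (T₁,...,Tₙ) a tuple of bounded operators. Suppose λ ∈ ℂⁿ is such that for every δ > 0 and every closed subspace M ⊆ H of finite codimension there exists a unit vector x ∈ M with |⟨Tⱼx, x⟩ − λⱼ| < δ for all j. Then λ ∈ W_e(𝒯), i.e., there exists an orthonormal sequence (x_k) in H with ⟨Tⱼx_k, x_k⟩ → λⱼ for each j. -/
open Filter

/-- If for every `δ > 0` and every closed subspace `M` of finite codimension
there is a unit vector `x ∈ M` with `|⟨Tⱼ x, x⟩ − λⱼ| < δ` for all `j`, then `λ ∈ W_e(𝒯)`,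
i.e. there is an orthonormal sequence `(x_k)` with `⟨Tⱼ x_k, x_k⟩ → λⱼ` for each `j`. -/
theorem stmt9 {H : Type*} [NormedAddCommGroup H] [InnerProductSpace ℂ H] [CompleteSpace H]
    (hinf : ¬ FiniteDimensional ℂ H)
    (n : ℕ) (T : Fin n → H →L[ℂ] H) (l : Fin n → ℂ)
    (h : ∀ δ : ℝ, 0 < δ → ∀ M : Submodule ℂ H, IsClosed (M : Set H) →
      FiniteDimensional ℂ ↥Mᗮ →
      ∃ x ∈ M, ‖x‖ = 1 ∧ ∀ j, ‖(inner ℂ ((T j) x) x : ℂ) - l j‖ < δ) :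
    ∃ x : ℕ → H, Orthonormal ℂ x ∧
      ∀ j, Tendsto (fun k => (inner ℂ ((T j) (x k)) (x k) : ℂ)) atTop (nhds (l j)) := by
  classical
  set P : H × ℕ → Prop := fun p =>
    ‖p.1‖ = 1 ∧ ∀ j, ‖(inner ℂ ((T j) p.1) p.1 : ℂ) - l j‖ < 1 / (p.2 + 1)
  set r : H × ℕ → H × ℕ → Prop := fun p q =>
    (inner ℂ p.1 q.1 : ℂ) = 0 ∧ p.2 < q.2
  have key : ∀ s : Finset (H × ℕ), (∀ x ∈ s, P x) → ∃ y, P y ∧ ∀ x ∈ s, r x y := by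
    intro s _
    set K : Submodule ℂ H := Submodule.span ℂ (Prod.fst '' (s : Set (H × ℕ))) with hK
    have hKfin : FiniteDimensional ℂ ↥K := by
      apply FiniteDimensional.span_of_finite
      exact (s.finite_toSet).image _
    have hKK : Kᗮᗮ = K := Submodule.orthogonal_orthogonal K
    have hMfin : FiniteDimensional ℂ ↥(Kᗮᗮ) := by rw [hKK]; exact hKfin
    set m : ℕ := 1 + s.sup (fun p => p.2) with hm
    have hδ : (0:ℝ) < 1 / (m + 1) := by positivity
    obtain ⟨x, hxM, hx1, hxb⟩ := h (1 / (m + 1)) hδ Kᗮ (Submodule.isClosed_orthogonal K) hMfin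
    refine ⟨(x, m), ⟨hx1, by exact_mod_cast hxb⟩, ?_⟩
    intro p hp
    constructor
    · exact hxM p.1 (Submodule.subset_span ⟨p, hp, rfl⟩)
    · have : p.2 ≤ s.sup (fun p => p.2) := Finset.le_sup hp
      omega
  obtain ⟨f, hfP, hfr⟩ := exists_seq_of_forall_finset_exists P r key
  have hmono : StrictMono (fun k => (f k).2) := fun a b hab => (hfr a b hab).2
  have hge : ∀ k : ℕ, (k:ℝ) ≤ ((f k).2 : ℝ) := fun k => by exact_mod_cast hmono.le_apply
  refine ⟨fun k => (f k).1, ?_, ?_⟩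
  · rw [orthonormal_iff_ite]
    intro i j
    rcases lt_trichotomy i j with hij | hij | hij
    · simp [hij.ne, (hfr i j hij).1]
    · subst hij
      simp [inner_self_eq_norm_sq_to_K, (hfP i).1]
    · have := (hfr j i hij).1
      rw [← inner_conj_symm] at this
      have h0 : (inner ℂ (f i).1 (f j).1 : ℂ) = 0 := by
        simpa using congrArg (starRingEnd ℂ) this
      simp [hij.ne', h0]
  · intro j
    rw [tendsto_iff_norm_sub_tendsto_zero]
    apply squeeze_zero (fun k => norm_nonneg _) (fun k => ((hfP k).2 j).le)
    apply squeeze_zero (fun k => by positivity)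
      (g := fun k : ℕ => 1 / ((k:ℝ) + 1)) ?_ tendsto_one_div_add_atTop_nhds_zero_nat
    intro k
    apply one_div_le_one_div_of_le (by positivity)
    have := hge k
    linarith
end

section
/- Let H be a complex Hilbert space, n, r ∈ ℕ, let A₁,...,A_r be bounded operators on H, and let α₁,...,α_r ≥ 0 with ∑ⱼ αⱼ = 1. Then there exists a closed subspace M of the r-fold direct sum H^r such that the compression of the direct sum operator ⊕ⱼ Aⱼ to M is unitarily equivalent to ∑ⱼ αⱼ Aⱼ acting on H. -/
/-- if `S = ⊕ⱼ Aⱼ` acts coordinatewise on the `r`-fold Hilbert direct sum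
`H^r`, and `α₁,...,α_r ≥ 0` sum to `1`, then there is a closed subspace `M ⊆ H^r` such
that the compression of `S` to `M` is unitarily equivalent to `∑ⱼ αⱼ Aⱼ` on `H`; the
unitary equivalence is expressed via a linear isometric equivalence `U : H ≃ₗᵢ M` with
`⟨S (U x), U y⟩ = ⟨(∑ⱼ αⱼ Aⱼ) x, y⟩` for all `x, y ∈ H`. -/
theorem stmt10 {H : Type*} [NormedAddCommGroup H] [InnerProductSpace ℂ H] [CompleteSpace H]
    (n r : ℕ) (A : Fin r → H →L[ℂ] H)
    (α : Fin r → ℝ) (hα : ∀ j, 0 ≤ α j) (hs : ∑ j, α j = 1)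
    (S : PiLp 2 (fun _ : Fin r => H) →L[ℂ] PiLp 2 (fun _ : Fin r => H))
    (hS : ∀ (x : PiLp 2 (fun _ : Fin r => H)) (i : Fin r), S x i = A i (x i)) :
    ∃ M : Submodule ℂ (PiLp 2 (fun _ : Fin r => H)), IsClosed (M : Set (PiLp 2 (fun _ : Fin r => H))) ∧
      ∃ U : H ≃ₗᵢ[ℂ] M, ∀ x y : H,
        (inner ℂ (S ((U x : M) : PiLp 2 (fun _ : Fin r => H)))
          ((U y : M) : PiLp 2 (fun _ : Fin r => H)) : ℂ)
          = inner ℂ ((∑ j, (α j : ℂ) • A j) x) y := by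
  classical
  -- the embedding x ↦ (√αⱼ x)ⱼ
  let f : H →ₗ[ℂ] PiLp 2 (fun _ : Fin r => H) :=
    { toFun := fun x => WithLp.toLp 2 (fun j => ((Real.sqrt (α j) : ℝ) : ℂ) • x)
      map_add' := fun x y => by ext j; simp [smul_add]
      map_smul' := fun c x => by
        ext j
        show ((Real.sqrt (α j) : ℝ) : ℂ) • c • x = c • ((Real.sqrt (α j) : ℝ) : ℂ) • x
        rw [smul_comm] }
  have hf : ∀ (x : H) (j : Fin r), f x j = ((Real.sqrt (α j) : ℝ) : ℂ) • x := fun _ _ => rfl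
  have hnorm : ∀ x : H, ‖f x‖ = ‖x‖ := by
    intro x
    have h1 : ‖f x‖ ^ 2 = ‖x‖ ^ 2 := by
      rw [PiLp.norm_sq_eq_of_L2]
      have : ∀ j : Fin r, ‖f x j‖ ^ 2 = α j * ‖x‖ ^ 2 := by
        intro j
        rw [hf, norm_smul]
        simp [mul_pow, Complex.norm_real, abs_of_nonneg (Real.sqrt_nonneg _),
          Real.sq_sqrt (hα j)]
      rw [Finset.sum_congr rfl (fun j _ => this j), ← Finset.sum_mul, hs, one_mul]
    have := congrArg Real.sqrt h1
    simpa [Real.sqrt_sq, norm_nonneg] using this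
  let fi : H →ₗᵢ[ℂ] PiLp 2 (fun _ : Fin r => H) := ⟨f, hnorm⟩
  refine ⟨LinearMap.range f, ?_, fi.equivRange, ?_⟩
  · have h := fi.isometry.isClosedEmbedding.isClosed_range
    have hr : (LinearMap.range f : Set (PiLp 2 (fun _ : Fin r => H))) = Set.range fi := by
      ext z; simp [LinearMap.mem_range, Set.mem_range]; rfl
    rw [hr]; exact h
  · intro x y
    have hU : ∀ z : H, ((fi.equivRange z : PiLp 2 (fun _ : Fin r => H))) = f z := fun z => rfl
    rw [hU, hU, PiLp.inner_apply]
    have hterm : ∀ j : Fin r, (inner ℂ (S (f x) j) (f y j) : ℂ)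
        = (α j : ℂ) * inner ℂ (A j x) y := by
      intro j
      rw [hS, hf, hf, map_smul]
      rw [inner_smul_left, inner_smul_right]
      rw [← mul_assoc]
      congr 1
      rw [Complex.conj_ofReal, ← Complex.ofReal_mul, Real.mul_self_sqrt (hα j)]
    rw [Finset.sum_congr rfl (fun j _ => hterm j)]
    rw [ContinuousLinearMap.sum_apply, sum_inner]
    refine Finset.sum_congr rfl fun j _ => ?_
    rw [ContinuousLinearMap.smul_apply, inner_smul_left, Complex.conj_ofReal]
end

section
/- Let K be a complex Hilbert space, U a unitary operator on K, and k ∈ ℕ with k ≥ 1. For 0 ≤ j ≤ k−1 let Eⱼ be the spectral subspace of U corresponding to the arc {e^{2πit} : j/k ≤ t < (j+1)/k}, and define D on K by Dx = e^{2πij/k} x for x ∈ Eⱼ. Then ‖Uⁿ − Dⁿ‖ ≤ 2πn/k for all n ∈ ℕ. -/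
open scoped Real Pointwise

lemma exp_circle_lip (s t : ℝ) :
    ‖Complex.exp (2 * π * Complex.I * t) - Complex.exp (2 * π * Complex.I * s)‖ ≤
      2 * π * |t - s| := by
  have hf : ∀ x : ℝ, HasDerivAt (fun y : ℝ => Complex.exp (2 * π * Complex.I * y))
      (2 * π * Complex.I * Complex.exp (2 * π * Complex.I * x)) x := by
    intro x
    have h1 : HasDerivAt (fun z : ℂ => Complex.exp (2 * π * Complex.I * z))
        (Complex.exp (2 * π * Complex.I * x) * (2 * π * Complex.I)) (x : ℂ) := by
      simpa using ((hasDerivAt_id (x : ℂ)).const_mul (2 * π * Complex.I)).cexp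
    simpa [mul_comm] using h1.comp_ofReal
  have key := Convex.norm_image_sub_le_of_norm_hasDerivWithin_le
    (f := fun y : ℝ => Complex.exp (2 * π * Complex.I * y))
    (f' := fun x : ℝ => 2 * π * Complex.I * Complex.exp (2 * π * Complex.I * x))
    (s := Set.univ) (C := 2 * π)
    (fun x _ => (hf x).hasDerivWithinAt) ?_ convex_univ (Set.mem_univ s) (Set.mem_univ t)
  · simpa [Real.norm_eq_abs] using key
  · intro x _
    have : ‖Complex.exp (2 * π * Complex.I * x)‖ = 1 := by
      rw [Complex.norm_exp]
      norm_num [Complex.mul_re, Complex.mul_im]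
    rw [norm_mul, this, mul_one]
    simp [norm_mul, Complex.norm_real, abs_of_nonneg Real.pi_pos.le, Complex.norm_I]

lemma block_opNorm {K : Type*} [NormedAddCommGroup K] [InnerProductSpace ℂ K]
    {k : ℕ} (E : Fin k → Submodule ℂ K)
    (horth : ∀ i j, i ≠ j → ∀ x ∈ E i, ∀ y ∈ E j, (inner ℂ x y : ℂ) = 0)
    (hspan : (⨆ j, E j).topologicalClosure = ⊤)
    (T : K →L[ℂ] K) (C : ℝ) (hC : 0 ≤ C)
    (hTE : ∀ j, ∀ x ∈ E j, T x ∈ E j)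
    (hTb : ∀ j, ∀ x ∈ E j, ‖T x‖ ≤ C * ‖x‖) : ‖T‖ ≤ C := by
  have hofam : OrthogonalFamily ℂ (fun j => ↥(E j)) (fun j => (E j).subtypeₗᵢ) := by
    intro i j hij u w
    exact horth i j hij u u.2 w w.2
  refine T.opNorm_le_bound hC fun x => ?_
  -- the set of good points is closed and contains the supremum of the `E j`
  have hgood : ∀ y ∈ (⨆ j, E j : Submodule ℂ K), ‖T y‖ ≤ C * ‖y‖ := by
    intro y hy
    obtain ⟨f, hf, rfl⟩ := (Submodule.mem_iSup_iff_exists_finsupp _ _).mp hy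
    rw [Finsupp.sum_fintype _ _ (fun _ => rfl)]
    have hsum1 : ‖T (∑ i, f i)‖ ^ 2 ≤ (C * ‖∑ i, f i‖) ^ 2 := by
      rw [map_sum]
      have h1 : ‖∑ i, T (f i)‖ ^ 2 = ∑ i, ‖T (f i)‖ ^ 2 := by
        have := hofam.norm_sum (fun i => (⟨T (f i), hTE i (f i) (hf i)⟩ : E i)) Finset.univ
        simpa using this
      have h2 : ‖∑ i : Fin k, f i‖ ^ 2 = ∑ i, ‖f i‖ ^ 2 := by
        have := hofam.norm_sum (fun i => (⟨f i, hf i⟩ : E i)) Finset.univ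
        simpa using this
      rw [h1, mul_pow, h2, Finset.mul_sum]
      refine Finset.sum_le_sum fun i _ => ?_
      have := hTb i (f i) (hf i)
      calc ‖T (f i)‖ ^ 2 ≤ (C * ‖f i‖) ^ 2 := by
            exact pow_le_pow_left₀ (norm_nonneg _) this 2
        _ = C ^ 2 * ‖f i‖ ^ 2 := by ring
    exact (pow_le_pow_iff_left₀ (norm_nonneg _)
      (mul_nonneg hC (norm_nonneg _)) two_ne_zero).mp hsum1
  have hclosed : IsClosed {y : K | ‖T y‖ ≤ C * ‖y‖} := by
    apply isClosed_le <;> fun_prop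
  have hx : x ∈ closure ((⨆ j, E j : Submodule ℂ K) : Set K) := by
    have : x ∈ ((⨆ j, E j).topologicalClosure : Set K) := by
      rw [hspan]; trivial
    simpa [Submodule.topologicalClosure_coe] using this
  exact closure_minimal hgood hclosed hx

lemma unitary_dist_bound {H : Type*} [NormedAddCommGroup H] [InnerProductSpace ℂ H]
    [CompleteSpace H]
    (a : H →L[ℂ] H) (hiso : ∀ x, ‖a x‖ = ‖x‖) (hzero : (0 : ℂ) ∉ spectrum ℂ a)
    (lam : ℂ) (r : ℝ) (hr : 0 ≤ r)
    (hsp : ∀ z ∈ spectrum ℂ a, ‖z - lam‖ ≤ r) :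
    ‖a - algebraMap ℂ (H →L[ℂ] H) lam‖ ≤ r := by
  -- a is unitary
  have h1 : star a * a = 1 := by
    ext x
    refine ext_inner_right ℂ fun y => ?_
    have : (inner ℂ (a x) (a y) : ℂ) = inner ℂ x y :=
      (⟨(a : H →ₗ[ℂ] H), hiso⟩ : H →ₗᵢ[ℂ] H).inner_map_map x y
    simpa [ContinuousLinearMap.mul_apply, ContinuousLinearMap.star_eq_adjoint,
      ContinuousLinearMap.adjoint_inner_left] using this
  have hu : IsUnit a := (spectrum.zero_notMem_iff ℂ).mp hzero
  have h2 : a * star a = 1 := by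
    obtain ⟨u, rfl⟩ := hu
    have : star (u : H →L[ℂ] H) = ↑u⁻¹ := left_inv_eq_right_inv h1 u.mul_inv
    rw [this]; exact u.mul_inv
  haveI hn : IsStarNormal a := ⟨by rw [Commute, SemiconjBy, h1, h2]⟩
  set b := a - algebraMap ℂ (H →L[ℂ] H) lam with hb
  haveI hbn : IsStarNormal b := by
    constructor
    rw [Commute, SemiconjBy, hb, star_sub, ← algebraMap_star_comm]
    simp only [sub_mul, mul_sub]
    rw [h1, h2, ← Algebra.commutes (star lam) a, ← Algebra.commutes lam (star a)]
    have hcl : (algebraMap ℂ (H →L[ℂ] H) (star lam)) * (algebraMap ℂ (H →L[ℂ] H) lam)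
        = (algebraMap ℂ (H →L[ℂ] H) lam) * (algebraMap ℂ (H →L[ℂ] H) (star lam)) := by
      rw [← map_mul, ← map_mul, mul_comm]
    rw [hcl]; abel
  have hrad : spectralRadius ℂ b ≤ ENNReal.ofReal r := by
    rw [spectralRadius]
    refine iSup₂_le fun z hz => ?_
    have hz' : z ∈ spectrum ℂ a - ({lam} : Set ℂ) := by
      rw [spectrum.sub_singleton_eq]; exact hz
    obtain ⟨w, hw, y, hy, rfl⟩ := hz'
    simp only [Set.mem_singleton_iff] at hy
    subst hy
    have := hsp w hw
    simpa [← ENNReal.ofReal_coe_nnreal, ENNReal.ofReal_le_ofReal_iff hr, coe_nnnorm] using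
      ENNReal.ofReal_le_ofReal (q := r) this
  rw [IsStarNormal.spectralRadius_eq_nnnorm b, ENNReal.ofReal] at hrad
  have h3 : ‖b‖₊ ≤ r.toNNReal := ENNReal.coe_le_coe.mp hrad
  calc ‖b‖ = (‖b‖₊ : ℝ) := rfl
    _ ≤ (r.toNNReal : ℝ) := NNReal.coe_le_coe.mpr h3
    _ = r := Real.coe_toNNReal r hr





/-- Let `U` be unitary on `K`, and for `0 ≤ j ≤ k−1` let `E j` be the
spectral subspace of `U` for the arc `{e^{2πit} : j/k ≤ t < (j+1)/k}` — encoded here by: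
the `E j` are mutually orthogonal closed `U`-invariant subspaces with dense joint span,
and the restriction `V j` of `U` to `E j` has spectrum in the (closed) arc.  Let `D` act
as the scalar `e^{2πij/k}` on `E j`.  Then `‖Uⁿ − Dⁿ‖ ≤ 2πn/k` for all `n`. -/
theorem stmt13 {K : Type*} [NormedAddCommGroup K] [InnerProductSpace ℂ K] [CompleteSpace K]
    (U : K →L[ℂ] K)
    (hU1 : (ContinuousLinearMap.adjoint U).comp U = 1)
    (hU2 : U.comp (ContinuousLinearMap.adjoint U) = 1)
    (k : ℕ) (hk : 1 ≤ k)
    (E : Fin k → Submodule ℂ K)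
    (hclosed : ∀ j, IsClosed ((E j : Set K)))
    (horth : ∀ i j, i ≠ j → ∀ x ∈ E i, ∀ y ∈ E j, (inner ℂ x y : ℂ) = 0)
    (hspan : (⨆ j, E j).topologicalClosure = ⊤)
    (hinv : ∀ j, ∀ x ∈ E j, U x ∈ E j)
    (V : ∀ j, ↥(E j) →L[ℂ] ↥(E j))
    (hV : ∀ j (x : ↥(E j)), ((V j x : K)) = U (x : K))
    (hspec : ∀ j, spectrum ℂ (V j) ⊆
      {z : ℂ | ∃ t : ℝ, (j : ℝ) / k ≤ t ∧ t ≤ ((j : ℝ) + 1) / k ∧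
        z = Complex.exp (2 * π * Complex.I * t)})
    (D : K →L[ℂ] K)
    (hD : ∀ j, ∀ x ∈ E j, D x = Complex.exp (2 * π * Complex.I * j / k) • x) :
    ∀ n : ℕ, ‖U ^ n - D ^ n‖ ≤ 2 * π * n / k := by

  classical
  haveI : ∀ j, CompleteSpace (E j) := fun j => (hclosed j).completeSpace_coe
  have hk0 : (0:ℝ) < k := by exact_mod_cast hk
  have hUiso : ∀ x : K, ‖U x‖ = ‖x‖ := by
    intro x
    have h : (inner ℂ (U x) (U x) : ℂ) = inner ℂ x x := by
      have := congrArg (fun T : K →L[ℂ] K => T x) hU1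
      simp only [ContinuousLinearMap.comp_apply, ContinuousLinearMap.one_apply] at this
      calc (inner ℂ (U x) (U x) : ℂ)
          = inner ℂ ((ContinuousLinearMap.adjoint U) (U x)) x :=
            (ContinuousLinearMap.adjoint_inner_left U x (U x)).symm
        _ = inner ℂ x x := by rw [this]
    rw [inner_self_eq_norm_sq_to_K, inner_self_eq_norm_sq_to_K] at h
    have h2 : ‖U x‖ ^ 2 = ‖x‖ ^ 2 := by exact_mod_cast h
    nlinarith [norm_nonneg (U x), norm_nonneg x]
  set lam : Fin k → ℂ := fun j => Complex.exp (2 * π * Complex.I * j / k) with hlam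
  have hlam_abs : ∀ j, ‖lam j‖ = 1 := by
    intro j
    have : (2 * π * Complex.I * j / k : ℂ) = ((2 * π * j / k : ℝ) : ℂ) * Complex.I := by
      push_cast; ring
    rw [hlam]; simp only [this]
    exact Complex.norm_exp_ofReal_mul_I _
  -- blockwise bound for U - D
  have hblock : ∀ j : Fin k, ∀ x ∈ E j, ‖(U - D) x‖ ≤ (2 * π / k) * ‖x‖ := by
    intro j x hx
    set x' : E j := ⟨x, hx⟩ with hx'
    have hcoe : ((V j - algebraMap ℂ (↥(E j) →L[ℂ] ↥(E j)) (lam j)) x' : K) = (U - D) x := by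
      simp only [ContinuousLinearMap.sub_apply, Algebra.algebraMap_eq_smul_one,
        ContinuousLinearMap.smul_apply, ContinuousLinearMap.one_apply]
      rw [Submodule.coe_sub, hV j x', SetLike.val_smul]
      rw [hD j x hx]
    have hbound : ‖V j - algebraMap ℂ (↥(E j) →L[ℂ] ↥(E j)) (lam j)‖ ≤ 2 * π / k := by
      apply unitary_dist_bound (V j)
        (fun y => by
          have h0 : ‖(V j) y‖ = ‖(((V j) y : K))‖ := rfl
          rw [h0, hV j y, hUiso]; rfl)
        ?_ (lam j) (2 * π / k) (by positivity) ?_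
      · intro h0
        obtain ⟨t, -, -, ht⟩ := hspec j h0
        exact Complex.exp_ne_zero _ ht.symm
      · intro z hz
        obtain ⟨t, ht1, ht2, rfl⟩ := hspec j hz
        have hl : lam j = Complex.exp (2 * π * Complex.I * (((j : ℝ) / k : ℝ) : ℂ)) := by
          simp only [hlam]; congr 1; push_cast; ring
        rw [hl]
        refine le_trans (exp_circle_lip ((j : ℝ) / k) t) ?_
        have habs : |t - (j : ℝ) / k| ≤ 1 / k := by
          rw [abs_le]
          constructor
          · have : (0:ℝ) ≤ 1 / k := by positivity
            linarith
          · have : t - (j : ℝ) / k ≤ ((j : ℝ) + 1) / k - (j : ℝ) / k := by linarith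
            calc t - (j : ℝ) / k ≤ ((j : ℝ) + 1) / k - (j : ℝ) / k := this
              _ = 1 / k := by field_simp; ring
        calc 2 * π * |t - (j : ℝ) / k| ≤ 2 * π * (1 / k) :=
              mul_le_mul_of_nonneg_left habs (by positivity)
          _ = 2 * π / k := by ring
    calc ‖(U - D) x‖ = ‖(V j - algebraMap ℂ (↥(E j) →L[ℂ] ↥(E j)) (lam j)) x'‖ := by
          rw [← hcoe]; rfl
      _ ≤ ‖V j - algebraMap ℂ (↥(E j) →L[ℂ] ↥(E j)) (lam j)‖ * ‖x'‖ :=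
          ContinuousLinearMap.le_opNorm _ _
      _ ≤ (2 * π / k) * ‖x‖ := by
          apply mul_le_mul_of_nonneg_right hbound
          exact norm_nonneg _
  have hUD : ‖U - D‖ ≤ 2 * π / k := by
    apply block_opNorm E horth hspan (U - D) _ (by positivity) ?_ hblock
    intro j x hx
    have hDx : D x = lam j • x := hD j x hx
    have : (U - D) x = U x - D x := rfl
    rw [this, hDx]
    exact Submodule.sub_mem _ (hinv j x hx) (Submodule.smul_mem _ _ hx)
  have hDle : ‖D‖ ≤ 1 := by
    apply block_opNorm E horth hspan D 1 zero_le_one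
    · intro j x hx
      rw [hD j x hx]
      exact Submodule.smul_mem _ _ hx
    · intro j x hx
      rw [hD j x hx, norm_smul, hlam_abs j, one_mul]
  have hUle : ‖U‖ ≤ 1 := ContinuousLinearMap.opNorm_le_bound U zero_le_one
    (fun x => by rw [hUiso, one_mul])
  have hDn : ∀ n : ℕ, ‖D ^ n‖ ≤ 1 := by
    intro n
    induction n with
    | zero => simpa [ContinuousLinearMap.one_def] using ContinuousLinearMap.norm_id_le
    | succ n ih =>
        calc ‖D ^ (n + 1)‖ = ‖D ^ n * D‖ := by rw [pow_succ]
          _ ≤ ‖D ^ n‖ * ‖D‖ := norm_mul_le _ _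
          _ ≤ 1 * 1 := mul_le_mul ih hDle (norm_nonneg _) zero_le_one
          _ = 1 := mul_one 1
  intro n
  induction n with
  | zero => simp
  | succ n ih =>
      have key : U ^ (n + 1) - D ^ (n + 1) = U * (U ^ n - D ^ n) + (U - D) * D ^ n := by
        rw [mul_sub, sub_mul, pow_succ', pow_succ']
        abel
      calc ‖U ^ (n + 1) - D ^ (n + 1)‖
          ≤ ‖U * (U ^ n - D ^ n)‖ + ‖(U - D) * D ^ n‖ := by rw [key]; exact norm_add_le _ _
        _ ≤ ‖U‖ * ‖U ^ n - D ^ n‖ + ‖U - D‖ * ‖D ^ n‖ :=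
            add_le_add (norm_mul_le _ _) (norm_mul_le _ _)
        _ ≤ 1 * (2 * π * n / k) + (2 * π / k) * 1 := by
            apply add_le_add
            · exact mul_le_mul hUle ih (norm_nonneg _) zero_le_one
            · exact mul_le_mul hUD (hDn n) (norm_nonneg _) (by positivity)
        _ = 2 * π * ↑(n + 1) / ↑k := by push_cast; field_simp
end
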